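/- arXiv:2209.04903 — 4 statements merged into one kernel-verified Lean document; each statement's English description precedes it below -/
import Mathlib

section
/- (TDI of the clique constraint system of a perfect graph) Let G = (V,E) be a finite perfect graph and let w : V → ℕ be integral vertex weights. Then there exists an integer-valued nonnegative function y on the nonempty cliques of G with Σ_{Q : v ∈ Q} y_Q ≥ w(v) for every v ∈ V and Σ_Q y_Q = worth(G), where worth(G) is the maximum of Σ_{v ∈ S} w(v) over stable sets S of G. -/
open scoped Classical

def IsStableSet {V : Type*} (G : SimpleGraph V) (S : Set V) : Prop :=
  S.Pairwise fun u v => ¬ G.Adj u v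

def IsPerfect {V : Type*} (G : SimpleGraph V) : Prop :=
  ∀ T : Set V, (G.induce T).chromaticNumber = ((G.induce T).cliqueNum : ℕ∞)

/-- `worth(G)` for integral weights: the maximum weight of a stable set, in `ℕ`. -/
noncomputable def stableWorthNat {V : Type*} [Fintype V] (G : SimpleGraph V) (w : V → ℕ) : ℕ :=
  sSup {x : ℕ | ∃ S : Finset V, IsStableSet G (↑S : Set V) ∧ x = ∑ v ∈ S, w v}

noncomputable def cliquesOf {V : Type*} [Fintype V] (G : SimpleGraph V) : Finset (Finset V) :=
  Finset.univ.filter fun Q => Q.Nonempty ∧ G.IsClique (↑Q : Set V)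

namespace TDIAux

variable {V : Type*} [Fintype V]

/-- maximum `h`-weight of a clique -/
noncomputable def cw (G : SimpleGraph V) (h : V → ℕ) : ℕ :=
  (Finset.univ.filter fun Q : Finset V => G.IsClique (↑Q : Set V)).sup fun Q => ∑ v ∈ Q, h v

/-- maximum size of a stable set -/
noncomputable def alphaN (G : SimpleGraph V) : ℕ :=
  (Finset.univ.filter fun S : Finset V => IsStableSet G (↑S : Set V)).sup Finset.card

lemma le_cw {G : SimpleGraph V} {Q : Finset V} (hQ : G.IsClique (↑Q : Set V)) (h : V → ℕ) :
    ∑ v ∈ Q, h v ≤ cw G h :=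
  Finset.le_sup (f := fun Q => ∑ v ∈ Q, h v) (by simp [hQ])

lemma cw_le {G : SimpleGraph V} {h : V → ℕ} {n : ℕ}
    (H : ∀ Q : Finset V, G.IsClique (↑Q : Set V) → ∑ v ∈ Q, h v ≤ n) : cw G h ≤ n := by
  apply Finset.sup_le
  intro Q hQ
  exact H Q (by simpa using hQ)

lemma le_alphaN {G : SimpleGraph V} {S : Finset V} (hS : IsStableSet G (↑S : Set V)) :
    S.card ≤ alphaN G :=
  Finset.le_sup (f := Finset.card) (by simp [hS])

lemma cw_mono {G : SimpleGraph V} {h h' : V → ℕ} (hh : ∀ v, h v ≤ h' v) : cw G h ≤ cw G h' :=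
  cw_le fun Q hQ => le_trans (Finset.sum_le_sum fun v _ => hh v) (le_cw hQ h')

end TDIAux

namespace TDIAux2
open TDIAux
variable {V : Type*} [Fintype V]

lemma clique_inter_stable {G : SimpleGraph V} {Q S : Finset V} (hQ : G.IsClique (↑Q : Set V))
    (hS : IsStableSet G (↑S : Set V)) : (Q.filter (· ∈ S)).card ≤ 1 := by
  rw [Finset.card_le_one]
  intro a ha b hb
  simp only [Finset.mem_filter] at ha hb
  by_contra hab
  exact hS (by exact_mod_cast ha.2) (by exact_mod_cast hb.2) hab (hQ ha.1 hb.1 hab)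

lemma sum_countP (m : Multiset (Finset V)) (Q : Finset V) :
    ∑ v ∈ Q, m.countP (fun S => v ∈ S) = (m.map fun S => (Q.filter (· ∈ S)).card).sum := by
  induction m using Multiset.induction with
  | empty => simp
  | cons a s ih =>
      simp only [Multiset.countP_cons, Multiset.map_cons, Multiset.sum_cons,
        Finset.sum_add_distrib, ih]
      rw [add_comm]
      congr 1
      simp [Finset.sum_ite_eq, Finset.card_filter]

/-- the number of elements of `m` containing `v` -/
noncomputable def cnt (m : Multiset (Finset V)) (v : V) : ℕ := m.countP (fun S => v ∈ S)

lemma cnt_cons (A : Finset V) (m : Multiset (Finset V)) (v : V) :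
    cnt (A ::ₘ m) v = cnt m v + if v ∈ A then 1 else 0 := Multiset.countP_cons _ _ _

lemma cnt_add (m m' : Multiset (Finset V)) (v : V) :
    cnt (m + m') v = cnt m v + cnt m' v := Multiset.countP_add _ _ _

lemma cnt_replicate_empty (n : ℕ) (v : V) : cnt (Multiset.replicate n (∅ : Finset V)) v = 0 := by
  induction n with
  | zero => simp [cnt]
  | succ k ih =>
      rw [Multiset.replicate_succ, cnt, Multiset.countP_cons]
      simpa [cnt] using ih

end TDIAux2

namespace TDIAux3
open TDIAux TDIAux2
variable {V : Type*} [Fintype V]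

lemma cliqueNum_induce_eq (G : SimpleGraph V) (h : V → ℕ) (hh : ∀ v, h v ≤ 1) :
    (G.induce {v | h v = 1}).cliqueNum = cw G h := by
  set T : Set V := {v | h v = 1} with hT
  apply le_antisymm
  · obtain ⟨s, hs⟩ := SimpleGraph.exists_isNClique_cliqueNum (G := G.induce T)
    set Q : Finset V := s.map ⟨Subtype.val, Subtype.val_injective⟩ with hQdef
    have hQc : G.IsClique (↑Q : Set V) := by
      intro a ha b hb hab
      simp only [hQdef, Finset.coe_map, Set.mem_image, Finset.mem_coe] at ha hb
      obtain ⟨a', ha', rfl⟩ := ha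
      obtain ⟨b', hb', rfl⟩ := hb
      exact hs.isClique ha' hb' (fun e => hab (by rw [e]))
    calc (G.induce T).cliqueNum = s.card := hs.card_eq.symm
      _ = ∑ v ∈ Q, h v := by
          rw [Finset.sum_congr rfl (g := fun _ => 1), Finset.sum_const, smul_eq_mul, mul_one,
            hQdef, Finset.card_map]
          intro v hv
          simp only [hQdef, Finset.mem_map] at hv
          obtain ⟨v', _, rfl⟩ := hv
          exact v'.2
      _ ≤ cw G h := le_cw hQc h
  · apply cw_le
    intro Q hQ
    have key : ∀ v ∈ Q, h v = if v ∈ T then 1 else 0 := by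
      intro v _
      by_cases hv : v ∈ T
      · simp only [hv, if_true]; exact hv
      · simp only [hv, if_false]
        have := hh v
        have : h v ≠ 1 := hv
        omega
    rw [Finset.sum_congr rfl key, ← Finset.card_filter]
    set s : Finset ↥T := (Q.filter (· ∈ T)).subtype (· ∈ T) with hsdef
    have hcard : (Q.filter (· ∈ T)).card = s.card := by
      rw [hsdef, Finset.card_subtype, Finset.filter_filter]
      congr 1
      apply Finset.filter_congr
      intro v _
      tauto
    rw [hcard]
    have hsc : (G.induce T).IsClique (↑s : Set ↥T) := by
      intro a ha b hb hab
      simp only [hsdef, Finset.mem_coe, Finset.mem_subtype, Finset.mem_filter] at ha hb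
      exact hQ ha.1 hb.1 (fun e => hab (Subtype.ext e))
    exact SimpleGraph.IsClique.card_le_cliqueNum (tc := hsc)

lemma base_cover (G : SimpleGraph V) (hG : IsPerfect G) (h : V → ℕ) (hh : ∀ v, h v ≤ 1) :
    ∃ 𝒮 : Multiset (Finset V), (∀ S ∈ 𝒮, IsStableSet G (↑S : Set V)) ∧
      Multiset.card 𝒮 = cw G h ∧ ∀ v, cnt 𝒮 v = h v := by
  set T : Set V := {v | h v = 1} with hT
  have hcn : (G.induce T).cliqueNum = cw G h := cliqueNum_induce_eq G h hh
  have hcol : (G.induce T).Colorable (cw G h) := by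
    rw [← SimpleGraph.chromaticNumber_le_iff_colorable, hG T, hcn]
  obtain ⟨C⟩ := hcol
  set fib : Fin (cw G h) → Finset V :=
    fun c => Finset.univ.filter (fun v => ∃ hv : v ∈ T, C ⟨v, hv⟩ = c) with hfib
  refine ⟨(Finset.univ : Finset (Fin (cw G h))).val.map fib, ?_, ?_, ?_⟩
  · intro S hS
    simp only [Multiset.mem_map] at hS
    obtain ⟨c, _, rfl⟩ := hS
    intro a ha b hb hab hadj
    simp only [hfib, Finset.coe_filter, Set.mem_setOf_eq] at ha hb
    obtain ⟨_, ⟨ha', hca⟩⟩ := ha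
    obtain ⟨_, ⟨hb', hcb⟩⟩ := hb
    exact C.valid (v := ⟨a, ha'⟩) (w := ⟨b, hb'⟩) hadj (by rw [hca, hcb])
  · simp
  · intro v
    rw [cnt, Multiset.countP_map]
    by_cases hv : v ∈ T
    · have : (Finset.univ.val.filter fun c => v ∈ fib c) = {C ⟨v, hv⟩} := by
        rw [show (Finset.univ.val.filter fun c => v ∈ fib c)
            = (Finset.univ.filter fun c => v ∈ fib c).val from rfl]
        rw [show ({C ⟨v, hv⟩} : Multiset (Fin (cw G h))) = ({C ⟨v, hv⟩} : Finset (Fin (cw G h))).val from rfl]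
        congr 1
        ext c
        simp only [Finset.mem_filter, Finset.mem_univ, true_and, Finset.mem_singleton, hfib]
        constructor
        · rintro ⟨_, hc⟩; rw [← hc]
        · intro hc; exact ⟨hv, hc.symm⟩
      rw [this]
      simpa using hv.symm
    · have : (Finset.univ.val.filter fun c => v ∈ fib c) = 0 := by
        rw [Multiset.filter_eq_nil]
        intro c _ hc
        simp only [hfib, Finset.mem_filter] at hc
        exact hv hc.2.1
      rw [this]
      have h1 := hh v
      have h2 : h v ≠ 1 := hv
      simp only [Multiset.card_zero]
      omega

lemma stable_cover (G : SimpleGraph V) (hG : IsPerfect G) :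
    ∀ (n : ℕ) (h : V → ℕ), (∑ v, h v ≤ n) →
    ∃ 𝒮 : Multiset (Finset V), (∀ S ∈ 𝒮, IsStableSet G (↑S : Set V)) ∧
      Multiset.card 𝒮 = cw G h ∧ ∀ v, cnt 𝒮 v = h v := by
  intro n
  induction n with
  | zero =>
      intro h hsum
      refine base_cover G hG h (fun v => ?_)
      have : h v = 0 := by
        have := Finset.single_le_sum (f := h) (fun i _ => Nat.zero_le _) (Finset.mem_univ v)
        omega
      omega
  | succ n ih =>
      intro h hsum
      by_cases hsmall : ∀ v, h v ≤ 1
      · exact base_cover G hG h hsmall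
      push_neg at hsmall
      obtain ⟨v₀, hv₀⟩ := hsmall
      have hv₀2 : 2 ≤ h v₀ := hv₀
      set h' : V → ℕ := Function.update h v₀ (h v₀ - 1) with hh'
      have h'v₀ : h' v₀ = h v₀ - 1 := Function.update_self _ _ _
      have h'ne : ∀ v, v ≠ v₀ → h' v = h v := fun v hv => Function.update_of_ne hv _ _
      have hsum_split : ∀ Q : Finset V, v₀ ∈ Q → ∑ v ∈ Q, h' v + 1 = ∑ v ∈ Q, h v := by
        intro Q hQ
        have e1 : ∑ v ∈ Q.erase v₀, h' v + h' v₀ = ∑ v ∈ Q, h' v := Finset.sum_erase_add _ _ hQ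
        have e2 : ∑ v ∈ Q.erase v₀, h v + h v₀ = ∑ v ∈ Q, h v := Finset.sum_erase_add _ _ hQ
        have e3 : ∑ v ∈ Q.erase v₀, h' v = ∑ v ∈ Q.erase v₀, h v :=
          Finset.sum_congr rfl (fun v hv => h'ne v (Finset.ne_of_mem_erase hv))
        omega
      have hsum' : ∑ v, h' v ≤ n := by
        have := hsum_split Finset.univ (Finset.mem_univ v₀)
        omega
      have h'_le : ∀ v, h' v ≤ h v := by
        intro v
        by_cases hv : v = v₀
        · subst hv; omega
        · rw [h'ne v hv]
      obtain ⟨𝒮', hst', hcard', hcnt'⟩ := ih h' hsum'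
      set k := cw G h with hk
      set k' := cw G h' with hk'
      have hk'k : k' ≤ k := cw_mono h'_le
      have hkk' : k ≤ k' + 1 := by
        apply cw_le
        intro Q hQ
        by_cases hv₀Q : v₀ ∈ Q
        · have := hsum_split Q hv₀Q
          have := le_cw hQ h'
          omega
        · have e : ∑ v ∈ Q, h v = ∑ v ∈ Q, h' v :=
            Finset.sum_congr rfl (fun v hv => (h'ne v (fun e => hv₀Q (e ▸ hv))).symm)
          have := le_cw hQ h'
          omega
      rcases Nat.lt_or_ge k' k with hcase | hcase
      · -- k = k' + 1
        have hkeq : k = k' + 1 := by omega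
        refine ⟨{v₀} ::ₘ 𝒮', ?_, ?_, ?_⟩
        · intro S hS
          rcases Multiset.mem_cons.mp hS with rfl | hS
          · simp only [Finset.coe_singleton]
            exact Set.pairwise_singleton _ _
          · exact hst' S hS
        · rw [Multiset.card_cons, hcard', hkeq]
        · intro v
          rw [cnt_cons]
          by_cases hv : v = v₀
          · subst hv
            rw [hcnt' v, h'v₀]
            simp
            omega
          · rw [hcnt' v, h'ne v hv]
            simp [hv]
      · -- k = k'
        have hkeq : k = k' := le_antisymm (by omega) hk'k
        have hApos : 0 < cnt 𝒮' v₀ := by rw [hcnt' v₀, h'v₀]; omega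
        obtain ⟨A, hA𝒮, hv₀A⟩ := Multiset.countP_pos.mp hApos
        have hk'pos : 1 ≤ k' := by
          rw [← hcard']
          exact Multiset.card_pos_iff_exists_mem.mpr ⟨A, hA𝒮⟩
        have hA1 : ∀ v ∈ A, 1 ≤ h' v := by
          intro v hv
          rw [← hcnt' v]
          exact Multiset.countP_pos.mpr ⟨A, hA𝒮, hv⟩
        set h'' : V → ℕ := fun v => h' v - (if v ∈ A ∧ v ≠ v₀ then 1 else 0) with hh''
        have h''_le : ∀ v, h'' v ≤ h' v := fun v => Nat.sub_le _ _
        have h''eq : ∀ v, (v ∈ A ∧ v ≠ v₀) → h'' v + 1 = h' v := by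
          intro v hv
          have := hA1 v hv.1
          simp only [hh'', if_pos hv]
          omega
        have h''eq' : ∀ v, ¬(v ∈ A ∧ v ≠ v₀) → h'' v = h' v := by
          intro v hv
          simp only [hh'', if_neg hv]
          omega
        obtain ⟨𝒮'', hst'', hcard'', hcnt''⟩ := ih h''
          (le_trans (Finset.sum_le_sum fun v _ => h''_le v) hsum')
        set k'' := cw G h'' with hk''
        have hk''le : k'' ≤ k - 1 := by
          apply cw_le
          intro Q hQ
          have hQk : ∑ v ∈ Q, h v ≤ k := le_cw hQ h
          have hQk' : ∑ v ∈ Q, h' v ≤ k' := le_cw hQ h'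
          by_cases hv₀Q : v₀ ∈ Q
          · have h1 := hsum_split Q hv₀Q
            have h2 : ∑ v ∈ Q, h'' v ≤ ∑ v ∈ Q, h' v := Finset.sum_le_sum fun v _ => h''_le v
            omega
          · by_cases hQA : ∃ u ∈ Q, u ∈ A
            · obtain ⟨u, huQ, huA⟩ := hQA
              have hune : u ≠ v₀ := fun e => hv₀Q (e ▸ huQ)
              have : ∑ v ∈ Q, h'' v + 1 ≤ ∑ v ∈ Q, h' v := by
                rw [← Finset.sum_erase_add Q h'' huQ, ← Finset.sum_erase_add Q h' huQ]
                have := h''eq u ⟨huA, hune⟩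
                have : ∑ v ∈ Q.erase u, h'' v ≤ ∑ v ∈ Q.erase u, h' v :=
                  Finset.sum_le_sum fun v _ => h''_le v
                omega
              omega
            · push_neg at hQA
              have heq : ∀ v ∈ Q, h'' v = h' v := by
                intro v hv
                exact h''eq' v (fun hc => hQA v hv hc.1)
              have hid : ∑ v ∈ Q, h' v = ((𝒮'.map fun S => (Q.filter (· ∈ S)).card)).sum := by
                rw [← sum_countP]
                exact Finset.sum_congr rfl fun v _ => (hcnt' v).symm
              have hsplit : 𝒮' = A ::ₘ 𝒮'.erase A := (Multiset.cons_erase hA𝒮).symm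
              have hQA0 : (Q.filter (· ∈ A)).card = 0 := by
                rw [Finset.card_eq_zero, Finset.filter_eq_empty_iff]
                exact hQA
              have hrest : ((𝒮'.erase A).map fun S => (Q.filter (· ∈ S)).card).sum
                  ≤ Multiset.card ((𝒮'.erase A).map fun S => (Q.filter (· ∈ S)).card) • 1 := by
                apply Multiset.sum_le_card_nsmul
                intro x hx
                obtain ⟨S, hS, rfl⟩ := Multiset.mem_map.mp hx
                exact clique_inter_stable hQ (hst' S (Multiset.mem_of_mem_erase hS))
              rw [Multiset.card_map, smul_eq_mul, mul_one] at hrest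
              have hce : Multiset.card (𝒮'.erase A) + 1 = k' := by
                rw [← hcard']
                conv_rhs => rw [hsplit]
                rw [Multiset.card_cons]
              have hq' : ∑ v ∈ Q, h' v ≤ k' - 1 := by
                rw [hid]
                conv_lhs => rw [hsplit]
                rw [Multiset.map_cons, Multiset.sum_cons, hQA0]
                omega
              have heqsum : ∑ v ∈ Q, h'' v = ∑ v ∈ Q, h' v := Finset.sum_congr rfl heq
              omega
        refine ⟨A ::ₘ (Multiset.replicate (k - 1 - k'') ∅ + 𝒮''), ?_, ?_, ?_⟩
        · intro S hS
          rcases Multiset.mem_cons.mp hS with rfl | hS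
          · exact hst' S hA𝒮
          · rcases Multiset.mem_add.mp hS with hS | hS
            · rw [Multiset.eq_of_mem_replicate hS]
              simp only [Finset.coe_empty]
              exact Set.pairwise_empty _
            · exact hst'' S hS
        · rw [Multiset.card_cons, Multiset.card_add, Multiset.card_replicate, hcard'']
          omega
        · intro v
          rw [cnt_cons, cnt_add, cnt_replicate_empty, hcnt'']
          by_cases hvv₀ : v = v₀
          · subst hvv₀
            rw [h''eq' v (by tauto), if_pos hv₀A, h'v₀]
            omega
          · by_cases hvA : v ∈ A
            · rw [if_pos hvA]
              have := h''eq v ⟨hvA, hvv₀⟩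
              rw [h'ne v hvv₀] at this
              omega
            · rw [if_neg hvA, h''eq' v (by tauto), h'ne v hvv₀]
              omega

lemma filter_mem_univ_card (S : Finset V) : (Finset.univ.filter (· ∈ S)).card = S.card := by
  congr 1
  ext v
  simp

lemma alphaN_pos (G : SimpleGraph V) [Nonempty V] : 1 ≤ alphaN G := by
  obtain ⟨v⟩ := ‹Nonempty V›
  have : IsStableSet G (↑({v} : Finset V) : Set V) := by
    simp only [Finset.coe_singleton]
    exact Set.pairwise_singleton _ _
  simpa using le_alphaN this

lemma exists_max_stable (G : SimpleGraph V) :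
    ∃ S : Finset V, IsStableSet G (↑S : Set V) ∧ S.card = alphaN G := by
  have hne : (Finset.univ.filter fun S : Finset V => IsStableSet G (↑S : Set V)).Nonempty := by
    refine ⟨∅, ?_⟩
    simp only [Finset.mem_filter, Finset.mem_univ, true_and, Finset.coe_empty]
    exact Set.pairwise_empty _
  obtain ⟨S, hS, hSc⟩ := Finset.exists_mem_eq_sup _ hne Finset.card
  simp only [Finset.mem_filter, Finset.mem_univ, true_and] at hS
  exact ⟨S, hS, hSc.symm⟩

lemma exists_hitting_clique (G : SimpleGraph V) (hG : IsPerfect G) [Nonempty V] :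
    ∃ Q : Finset V, G.IsClique (↑Q : Set V) ∧
      ∀ S : Finset V, IsStableSet G (↑S : Set V) → S.card = alphaN G → ∃ u, u ∈ Q ∧ u ∈ S := by
  by_contra hcon
  push_neg at hcon
  have hcon' : ∀ Q : Finset V, G.IsClique (↑Q : Set V) →
      ∃ S₀ : Finset V, IsStableSet G (↑S₀ : Set V) ∧ S₀.card = alphaN G ∧ ∀ u ∈ Q, u ∉ S₀ := by
    intro Q hQ
    obtain ⟨S₀, h1, h2, h3⟩ := hcon Q hQ
    exact ⟨S₀, h1, h2, fun u hu hus => h3 u hu hus⟩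
  set α := alphaN G with hα
  have hα1 : 1 ≤ α := alphaN_pos G
  set M := Finset.univ.filter
    (fun S : Finset V => IsStableSet G (↑S : Set V) ∧ S.card = α) with hM
  set t := M.card with ht
  have ht1 : 1 ≤ t := by
    obtain ⟨S, hS1, hS2⟩ := exists_max_stable G
    have : S ∈ M := by simp [hM, hS1, hS2, hα]
    exact Finset.card_pos.mpr ⟨S, this⟩
  set h : V → ℕ := fun v => (M.filter (v ∈ ·)).card with hh
  have hdouble : ∀ Q : Finset V, ∑ v ∈ Q, h v = ∑ S ∈ M, (Q.filter (· ∈ S)).card := by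
    intro Q
    simp only [hh, Finset.card_filter]
    rw [Finset.sum_comm]
  have hsumh : ∑ v, h v = t * α := by
    rw [hdouble]
    have : ∀ S ∈ M, (Finset.univ.filter (· ∈ S)).card = α := by
      intro S hS
      simp only [hM, Finset.mem_filter] at hS
      rw [filter_mem_univ_card]
      exact hS.2.2
    rw [Finset.sum_congr rfl this, Finset.sum_const, smul_eq_mul]
  have hcw : cw G h ≤ t - 1 := by
    apply cw_le
    intro Q hQ
    obtain ⟨S₀, hS₀st, hS₀c, hS₀d⟩ := hcon' Q hQ
    have hS₀M : S₀ ∈ M := by simp [hM, hS₀st, hS₀c]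
    rw [hdouble Q, ← Finset.add_sum_erase _ _ hS₀M]
    have h0 : (Q.filter (· ∈ S₀)).card = 0 := by
      rw [Finset.card_eq_zero, Finset.filter_eq_empty_iff]
      exact hS₀d
    have hb : ∑ S ∈ M.erase S₀, (Q.filter (· ∈ S)).card ≤ (M.erase S₀).card • 1 := by
      apply Finset.sum_le_card_nsmul
      intro S hS
      have hSM := Finset.mem_of_mem_erase hS
      simp only [hM, Finset.mem_filter] at hSM
      exact clique_inter_stable hQ hSM.2.1
    rw [smul_eq_mul, mul_one, Finset.card_erase_of_mem hS₀M] at hb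
    omega
  obtain ⟨𝒮, hst, hcard, hcnt⟩ := stable_cover G hG (∑ v, h v) h le_rfl
  have hsum2 : ∑ v, h v = (𝒮.map fun S => (Finset.univ.filter (· ∈ S)).card).sum := by
    rw [← sum_countP]
    exact Finset.sum_congr rfl fun v _ => (hcnt v).symm
  have hbound : (𝒮.map fun S => (Finset.univ.filter (· ∈ S)).card).sum
      ≤ Multiset.card (𝒮.map fun S => (Finset.univ.filter (· ∈ S)).card) • α := by
    apply Multiset.sum_le_card_nsmul
    intro x hx
    obtain ⟨S, hS, rfl⟩ := Multiset.mem_map.mp hx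
    rw [filter_mem_univ_card]
    exact le_alphaN (hst S hS)
  rw [Multiset.card_map, smul_eq_mul, hcard] at hbound
  have hfinal : t * α ≤ (t - 1) * α := by
    calc t * α = ∑ v, h v := hsumh.symm
      _ = _ := hsum2
      _ ≤ cw G h * α := hbound
      _ ≤ (t - 1) * α := Nat.mul_le_mul_right _ hcw
  have : (t - 1) * α < t * α :=
    Nat.mul_lt_mul_of_lt_of_le (by omega) le_rfl (by omega)
  omega

end TDIAux3

namespace TDIAux4
open TDIAux TDIAux2 TDIAux3

universe u

lemma isClique_of_embedding {V W : Type*} {A : SimpleGraph V} {B : SimpleGraph W}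
    (f : A ↪g B) {s : Finset V} (hs : A.IsClique (↑s : Set V)) :
    B.IsClique (↑(s.map f.toEmbedding) : Set W) := by
  intro a ha b hb hab
  simp only [Finset.coe_map, Set.mem_image, Finset.mem_coe] at ha hb
  obtain ⟨a', ha', rfl⟩ := ha
  obtain ⟨b', hb', rfl⟩ := hb
  exact f.map_adj_iff.mpr (hs ha' hb' (fun e => hab (by rw [e])))

lemma cliqueNum_le_of_embedding {V W : Type*} [Fintype V] [Fintype W]
    {A : SimpleGraph V} {B : SimpleGraph W} (f : A ↪g B) : A.cliqueNum ≤ B.cliqueNum := by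
  obtain ⟨s, hs⟩ := SimpleGraph.exists_isNClique_cliqueNum (G := A)
  have h1 : B.IsClique (↑(s.map f.toEmbedding) : Set W) := isClique_of_embedding f hs.isClique
  have h2 := SimpleGraph.IsClique.card_le_cliqueNum (tc := h1)
  rwa [Finset.card_map, hs.card_eq] at h2

lemma cliqueNum_eq_of_iso {V W : Type*} [Fintype V] [Fintype W]
    {A : SimpleGraph V} {B : SimpleGraph W} (f : A ≃g B) : A.cliqueNum = B.cliqueNum :=
  le_antisymm (cliqueNum_le_of_embedding f.toEmbedding)
    (cliqueNum_le_of_embedding f.symm.toEmbedding)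

lemma chromaticNumber_eq_of_iso {V W : Type*} {A : SimpleGraph V} {B : SimpleGraph W}
    (f : A ≃g B) : A.chromaticNumber = B.chromaticNumber :=
  le_antisymm (SimpleGraph.chromaticNumber_mono_of_hom f.toEmbedding.toHom)
    (SimpleGraph.chromaticNumber_mono_of_hom f.symm.toEmbedding.toHom)

noncomputable def induceInduceIso {V : Type*} (G : SimpleGraph V) (s : Set V) (T : Set ↥s) :
    (G.induce s).induce T ≃g G.induce (Subtype.val '' T) where
  toEquiv := Equiv.Set.image Subtype.val T Subtype.val_injective
  map_rel_iff' := by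
    intro a b
    simp only [Equiv.Set.image, Equiv.Set.imageOfInjOn, Equiv.coe_fn_mk,
      SimpleGraph.comap_adj, Function.Embedding.coe_subtype]

lemma perf_induce {V : Type*} [Fintype V] (G : SimpleGraph V) (hG : IsPerfect G) (s : Set V) :
    IsPerfect (G.induce s) := by
  intro T
  have e := induceInduceIso G s T
  rw [chromaticNumber_eq_of_iso e, cliqueNum_eq_of_iso e]
  exact hG (Subtype.val '' T)

end TDIAux4

namespace TDIAux5
open TDIAux TDIAux2 TDIAux3 TDIAux4

universe u

lemma stable_iff_clique_compl {V : Type*} {G : SimpleGraph V} {S : Set V} :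
    IsStableSet G S ↔ Gᶜ.IsClique S := by
  constructor
  · intro hS a ha b hb hab
    exact ⟨hab, hS ha hb hab⟩
  · intro hS a ha b hb hab
    exact ((hS ha hb hab).2)

lemma cliqueNum_compl {V : Type*} [Fintype V] (G : SimpleGraph V) :
    Gᶜ.cliqueNum = alphaN G := by
  apply le_antisymm
  · obtain ⟨s, hs⟩ := SimpleGraph.exists_isNClique_cliqueNum (G := Gᶜ)
    rw [← hs.card_eq]
    exact le_alphaN (stable_iff_clique_compl.mpr hs.isClique)
  · obtain ⟨S, hS1, hS2⟩ := exists_max_stable G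
    rw [← hS2]
    exact SimpleGraph.IsClique.card_le_cliqueNum (tc := stable_iff_clique_compl.mp hS1)

lemma compl_colorable : ∀ (n : ℕ) (V : Type u) [Fintype V] (G : SimpleGraph V),
    Fintype.card V ≤ n → IsPerfect G → Gᶜ.Colorable (alphaN G) := by
  intro n
  induction n with
  | zero =>
      intro V _ G hcard _
      haveI : IsEmpty V := Fintype.card_eq_zero_iff.mp (le_antisymm hcard (Nat.zero_le _))
      exact SimpleGraph.Colorable.of_isEmpty (G := Gᶜ) _
  | succ n ih =>
      intro V _ G hcard hG
      by_cases hE : IsEmpty V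
      · exact SimpleGraph.Colorable.of_isEmpty (G := Gᶜ) _
      haveI : Nonempty V := not_isEmpty_iff.mp hE
      obtain ⟨Q, hQc, hQhit⟩ := exists_hitting_clique G hG
      obtain ⟨S₀, hS₀st, hS₀c⟩ := exists_max_stable G
      obtain ⟨u, huQ, _⟩ := hQhit S₀ hS₀st hS₀c
      set s : Set V := {v | v ∉ Q} with hs
      have hus : ¬(u ∈ s) := by simp [hs, huQ]
      have hcard' : Fintype.card ↥s ≤ n := by
        have hlt : Fintype.card ↥s < Fintype.card V := by
          apply Fintype.card_lt_of_injective_of_notMem (b := u)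
            (Subtype.val : ↥s → V) Subtype.val_injective
          rintro ⟨⟨x, hx⟩, rfl⟩
          exact hus hx
        omega
      have hG' := perf_induce G hG s
      have halpha : alphaN (G.induce s) + 1 ≤ alphaN G := by
        have h1 : 1 ≤ alphaN G := alphaN_pos G
        have h2 : alphaN (G.induce s) ≤ alphaN G - 1 := by
          apply Finset.sup_le
          intro S' hS'
          simp only [Finset.mem_filter, Finset.mem_univ, true_and] at hS'
          set S : Finset V := S'.map ⟨Subtype.val, Subtype.val_injective⟩ with hS
          have hSst : IsStableSet G (↑S : Set V) := by
            intro a ha b hb hab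
            simp only [hS, Finset.coe_map, Set.mem_image, Finset.mem_coe] at ha hb
            obtain ⟨a', ha', rfl⟩ := ha
            obtain ⟨b', hb', rfl⟩ := hb
            exact hS' ha' hb' (fun e => hab (by rw [e]))
          have hcle : S.card ≤ alphaN G := le_alphaN hSst
          have hne : S.card ≠ alphaN G := by
            intro he
            obtain ⟨x, hxQ, hxS⟩ := hQhit S hSst he
            simp only [hS, Finset.mem_map] at hxS
            obtain ⟨x', _, rfl⟩ := hxS
            exact x'.2 hxQ
          have : S.card = S'.card := Finset.card_map _
          omega
        omega
      obtain ⟨C'⟩ := (ih ↥s (G.induce s) hcard' hG').mono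
        (show alphaN (G.induce s) ≤ alphaN G - 1 by omega)
      have hcol : Gᶜ.Colorable ((alphaN G - 1) + 1) := by
        refine ⟨SimpleGraph.Coloring.mk
          (fun v => if hv : v ∈ Q then Fin.last _ else (C' ⟨v, hv⟩).castSucc) ?_⟩
        intro a b hadj
        rw [SimpleGraph.compl_adj] at hadj
        obtain ⟨hab, hnadj⟩ := hadj
        by_cases haQ : a ∈ Q <;> by_cases hbQ : b ∈ Q
        · exact absurd (hQc haQ hbQ hab) hnadj
        · simp only [dif_pos haQ, dif_neg hbQ]
          exact (Fin.castSucc_lt_last _).ne'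
        · simp only [dif_pos hbQ, dif_neg haQ]
          exact (Fin.castSucc_lt_last _).ne
        · simp only [dif_neg haQ, dif_neg hbQ]
          intro he
          have he' : C' ⟨a, haQ⟩ = C' ⟨b, hbQ⟩ := Fin.castSucc_inj.mp he
          refine C'.valid ?_ he'
          show ((G.induce s)ᶜ).Adj ⟨a, haQ⟩ ⟨b, hbQ⟩
          rw [SimpleGraph.compl_adj]
          exact ⟨fun e => hab (congrArg Subtype.val e), hnadj⟩
      have : (alphaN G - 1) + 1 = alphaN G := by
        have := alphaN_pos G
        omega
      rwa [this] at hcol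

lemma compl_chromatic {V : Type u} [Fintype V] (G : SimpleGraph V) (hG : IsPerfect G) :
    Gᶜ.chromaticNumber = (Gᶜ.cliqueNum : ℕ∞) := by
  have hcol : Gᶜ.Colorable (alphaN G) := compl_colorable (Fintype.card V) V G le_rfl hG
  apply le_antisymm
  · rw [cliqueNum_compl]
    exact hcol.chromaticNumber_le
  · obtain ⟨t, ht⟩ := SimpleGraph.exists_isNClique_cliqueNum (G := Gᶜ)
    have := SimpleGraph.IsClique.card_le_chromaticNumber ht.isClique
    rwa [ht.card_eq] at this

lemma compl_perfect {V : Type u} [Fintype V] (G : SimpleGraph V) (hG : IsPerfect G) :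
    IsPerfect Gᶜ := by
  intro T
  have hE : Gᶜ.induce T = (G.induce T)ᶜ := by
    ext a b
    simp only [SimpleGraph.comap_adj, Function.Embedding.coe_subtype, SimpleGraph.compl_adj]
    constructor
    · rintro ⟨h1, h2⟩
      exact ⟨fun e => h1 (congrArg Subtype.val e), h2⟩
    · rintro ⟨h1, h2⟩
      exact ⟨fun e => h1 (Subtype.ext e), h2⟩
  rw [hE]
  exact compl_chromatic (G.induce T) (perf_induce G hG T)

end TDIAux5

namespace TDIAux6
open TDIAux TDIAux2 TDIAux3 TDIAux4 TDIAux5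

variable {V : Type*} [Fintype V]

lemma countP_mono (m : Multiset (Finset V)) (p q : Finset V → Prop) [DecidablePred p]
    [DecidablePred q] (h : ∀ a ∈ m, p a → q a) : m.countP p ≤ m.countP q := by
  induction m using Multiset.induction with
  | empty => simp
  | cons a s ih =>
      rw [Multiset.countP_cons, Multiset.countP_cons]
      have h1 := ih (fun x hx => h x (Multiset.mem_cons_of_mem hx))
      have h2 : (if p a then 1 else 0) ≤ (if q a then 1 else 0) := by
        by_cases hp : p a
        · simp [hp, h a (Multiset.mem_cons_self a s) hp]
        · simp [hp]
      omega

lemma sum_count_eq_card (m : Multiset (Finset V)) (F : Finset (Finset V))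
    (hm : ∀ S ∈ m, S ∈ F) : ∑ Q ∈ F, m.count Q = Multiset.card m := by
  induction m using Multiset.induction with
  | empty => simp
  | cons a s ih =>
      have ha : a ∈ F := hm a (Multiset.mem_cons_self a s)
      have ih' := ih (fun x hx => hm x (Multiset.mem_cons_of_mem hx))
      simp only [Multiset.count_cons, Multiset.card_cons, Finset.sum_add_distrib, ih']
      congr 1
      rw [Finset.sum_ite_eq' F a (fun _ => 1)]
      simp [ha]

lemma sum_count_filter (m : Multiset (Finset V)) (F : Finset (Finset V))
    (hm : ∀ S ∈ m, S ∈ F) (p : Finset V → Prop) [DecidablePred p] :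
    ∑ Q ∈ F.filter p, m.count Q = m.countP p := by
  induction m using Multiset.induction with
  | empty => simp
  | cons a s ih =>
      have ha : a ∈ F := hm a (Multiset.mem_cons_self a s)
      have ih' := ih (fun x hx => hm x (Multiset.mem_cons_of_mem hx))
      simp only [Multiset.count_cons, Multiset.countP_cons, Finset.sum_add_distrib, ih']
      congr 1
      rw [Finset.sum_ite_eq' (F.filter p) a (fun _ => 1)]
      simp [ha]

lemma clique_of_stable_compl {G : SimpleGraph V} {S : Set V}
    (hS : IsStableSet Gᶜ S) : G.IsClique S := by
  have := stable_iff_clique_compl.mp hS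
  rwa [compl_compl] at this

lemma stable_of_clique_compl {G : SimpleGraph V} {S : Set V}
    (hS : Gᶜ.IsClique S) : IsStableSet G S := stable_iff_clique_compl.mpr hS

lemma cw_compl_eq_worth (G : SimpleGraph V) (w : V → ℕ) :
    cw Gᶜ w = stableWorthNat G w := by
  have hbdd : BddAbove {x : ℕ | ∃ S : Finset V, IsStableSet G (↑S : Set V) ∧ x = ∑ v ∈ S, w v} := by
    refine ⟨∑ v, w v, ?_⟩
    rintro x ⟨S, _, rfl⟩
    exact Finset.sum_le_sum_of_subset (Finset.subset_univ S)
  apply le_antisymm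
  · apply cw_le
    intro Q hQ
    exact le_csSup hbdd ⟨Q, stable_of_clique_compl hQ, rfl⟩
  · have hne : {x : ℕ | ∃ S : Finset V, IsStableSet G (↑S : Set V) ∧ x = ∑ v ∈ S, w v}.Nonempty :=
      ⟨0, ∅, by simp [IsStableSet], by simp⟩
    apply csSup_le hne
    rintro x ⟨S, hS, rfl⟩
    exact le_cw (stable_iff_clique_compl.mp hS) w

end TDIAux6

theorem perfect_graph_clique_system_TDI
    {V : Type*} [Fintype V] (G : SimpleGraph V) (hG : IsPerfect G) (w : V → ℕ) :
    ∃ y : Finset V → ℕ,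
      (∀ v : V, w v ≤ ∑ Q ∈ (cliquesOf G).filter (fun Q => v ∈ Q), y Q) ∧
      ∑ Q ∈ cliquesOf G, y Q = stableWorthNat G w := by
  open TDIAux TDIAux2 TDIAux3 TDIAux4 TDIAux5 TDIAux6 in
  by_cases hE : IsEmpty V
  · refine ⟨0, fun v => isEmptyElim v, ?_⟩
    have h0 : stableWorthNat G w = 0 := by
      apply le_antisymm _ (Nat.zero_le _)
      have hne : {x : ℕ | ∃ S : Finset V, IsStableSet G (↑S : Set V) ∧ x = ∑ v ∈ S, w v}.Nonempty :=
        ⟨0, ∅, by simp [IsStableSet], by simp⟩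
      apply csSup_le hne
      rintro x ⟨S, _, rfl⟩
      have : S = ∅ := Finset.eq_empty_of_isEmpty S
      simp [this]
    simp [h0]
  · haveI : Nonempty V := not_isEmpty_iff.mp hE
    have hGc : IsPerfect Gᶜ := compl_perfect G hG
    obtain ⟨𝒮, hst, hcard, hcnt⟩ := stable_cover Gᶜ hGc (∑ v, w v) w le_rfl
    set v₁ : V := Classical.arbitrary V with hv₁
    set f : Finset V → Finset V := fun S => if S = ∅ then {v₁} else S with hf
    set 𝒮' : Multiset (Finset V) := 𝒮.map f with h𝒮'
    have hmem : ∀ S ∈ 𝒮', S ∈ cliquesOf G := by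
      intro S hS
      obtain ⟨S₀, hS₀, rfl⟩ := Multiset.mem_map.mp hS
      simp only [cliquesOf, Finset.mem_filter, Finset.mem_univ, true_and]
      by_cases h0 : S₀ = ∅
      · simp only [hf, if_pos h0]
        exact ⟨Finset.singleton_nonempty _, by simp⟩
      · simp only [hf, if_neg h0]
        exact ⟨Finset.nonempty_iff_ne_empty.mpr h0, clique_of_stable_compl (hst S₀ hS₀)⟩
    refine ⟨fun Q => 𝒮'.count Q, ?_, ?_⟩
    · intro v
      show w v ≤ ∑ Q ∈ (cliquesOf G).filter (fun Q => v ∈ Q), Multiset.count Q 𝒮'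
      rw [sum_count_filter 𝒮' (cliquesOf G) hmem (fun Q => v ∈ Q)]
      have h1 : 𝒮'.countP (fun Q => v ∈ Q) = 𝒮.countP (fun S => v ∈ f S) := by
        rw [h𝒮', Multiset.countP_map, Multiset.countP_eq_card_filter]
      have h2 : cnt 𝒮 v ≤ 𝒮.countP (fun S => v ∈ f S) := by
        apply countP_mono
        intro S _ hv
        have : S ≠ ∅ := by
          intro he
          rw [he] at hv
          exact absurd hv (Finset.notMem_empty v)
        simp [hf, this, hv]
      have h3 : cnt 𝒮 v = w v := hcnt v
      rw [h1]
      omega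
    · show ∑ Q ∈ cliquesOf G, Multiset.count Q 𝒮' = stableWorthNat G w
      rw [sum_count_eq_card 𝒮' (cliquesOf G) hmem, h𝒮', Multiset.card_map, hcard,
        cw_compl_eq_worth]
end

section
/- (TDI of the polymatroid constraint system) Let M be a matroid on a finite ground set U with rank function r and integral element weights w : U → ℕ. Then there exists an integer-valued nonnegative function y on the subsets of U with Σ_{S : e ∈ S} y_S ≥ w(e) for every e ∈ U and Σ_{S ⊆ U} r(S)·y_S = worth(M), where worth(M) is the maximum of Σ_{e ∈ I} w(e) over independent sets I of M. -/
open scoped Classical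

noncomputable def matroidRank {α : Type*} (M : Matroid α) (S : Set α) : ℕ :=
  sSup {n : ℕ | ∃ I ⊆ S, M.Indep I ∧ I.ncard = n}

/-- `worth(M)` for integral weights: the maximum weight of an independent set, in `ℕ`. -/
noncomputable def matroidWorthNat {α : Type*} [Fintype α] (M : Matroid α) (w : α → ℕ) : ℕ :=
  sSup {x : ℕ | ∃ I : Finset α, M.Indep (↑I : Set α) ∧ x = ∑ e ∈ I, w e}

section Aux

variable {α : Type*} [Fintype α] (M : Matroid α)

lemma rank_bdd (S : Set α) : BddAbove {n : ℕ | ∃ I ⊆ S, M.Indep I ∧ I.ncard = n} := by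
  refine ⟨Fintype.card α, fun n hn => ?_⟩
  obtain ⟨I, _, _, rfl⟩ := hn
  calc I.ncard ≤ (Set.univ : Set α).ncard :=
        Set.ncard_le_ncard (Set.subset_univ I) Set.finite_univ
    _ = Fintype.card α := by simp [Set.ncard_univ]

lemma ncard_le_rank {S I : Set α} (hI : M.Indep I) (hIS : I ⊆ S) :
    I.ncard ≤ matroidRank M S :=
  le_csSup (rank_bdd M S) ⟨I, hIS, hI, rfl⟩

lemma basis_ncard (hE : M.E = Set.univ) {S I : Set α} (hI : M.IsBasis I S) :
    I.ncard = matroidRank M S := by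
  refine le_antisymm (ncard_le_rank M hI.indep hI.subset) ?_
  refine csSup_le ⟨0, ∅, Set.empty_subset _, M.empty_indep, by simp⟩ ?_
  rintro n ⟨J, hJS, hJ, rfl⟩
  obtain ⟨J', hJ', hJJ'⟩ := hJ.subset_isBasis_of_subset hJS (by rw [hE]; exact Set.subset_univ _)
  have he : J'.encard = I.encard := hJ'.encard_eq_encard hI
  calc J.ncard ≤ J'.ncard := Set.ncard_le_ncard hJJ' (Set.toFinite _)
    _ = I.ncard := by rw [Set.ncard_def, Set.ncard_def, he]

lemma chain_exists (hE : M.E = Set.univ) (w : α → ℕ) (t : ℕ) :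
    ∀ d j, j + d = t + 1 → ∃ I : Set α, M.Indep I ∧ I ⊆ {e | j ≤ w e} ∧
      ∀ k, j ≤ k → k ≤ t → (I ∩ {e | k ≤ w e}).ncard = matroidRank M {e | k ≤ w e} := by
  intro d
  induction d with
  | zero =>
    intro j hj
    exact ⟨∅, M.empty_indep, Set.empty_subset _, fun k hk1 hk2 => by omega⟩
  | succ d ih =>
    intro j hj
    obtain ⟨I, hI, hIsub, hIcard⟩ := ih (j + 1) (by omega)
    have hsub : I ⊆ {e | j ≤ w e} := fun e he => by
      have := hIsub he; simp only [Set.mem_setOf_eq] at *; omega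
    obtain ⟨J, hJ, hIJ⟩ := hI.subset_isBasis_of_subset hsub (by rw [hE]; exact Set.subset_univ _)
    refine ⟨J, hJ.indep, hJ.subset, fun k hk1 hk2 => ?_⟩
    rcases eq_or_lt_of_le hk1 with rfl | hlt
    · rw [Set.inter_eq_self_of_subset_left hJ.subset]
      exact basis_ncard M hE hJ
    · have h1 : (J ∩ {e | k ≤ w e}).ncard ≤ matroidRank M {e | k ≤ w e} :=
        ncard_le_rank M (hJ.indep.subset Set.inter_subset_left) Set.inter_subset_right
      have h2 : matroidRank M {e | k ≤ w e} ≤ (J ∩ {e | k ≤ w e}).ncard := by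
        rw [← hIcard k hlt hk2]
        exact Set.ncard_le_ncard (Set.inter_subset_inter_left _ hIJ) (Set.toFinite _)
      omega

lemma sum_w_eq (w : α → ℕ) (t : ℕ) (ht : ∀ e, w e ≤ t) (I : Finset α) :
    ∑ e ∈ I, w e = ∑ k ∈ Finset.Icc 1 t, (I.filter (fun e => k ≤ w e)).card := by
  have h1 : ∀ e ∈ I, w e = ((Finset.Icc 1 t).filter (fun k => k ≤ w e)).card := by
    intro e _
    have h : (Finset.Icc 1 t).filter (fun k => k ≤ w e) = Finset.Icc 1 (w e) := by
      ext k
      simp only [Finset.mem_filter, Finset.mem_Icc]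
      have := ht e; omega
    rw [h, Nat.card_Icc]; omega
  rw [Finset.sum_congr rfl h1]
  simp_rw [Finset.card_filter]
  exact Finset.sum_comm

lemma worth_eq (hE : M.E = Set.univ) (w : α → ℕ) (t : ℕ) (ht : ∀ e, w e ≤ t) :
    matroidWorthNat M w = ∑ k ∈ Finset.Icc 1 t, matroidRank M {e | k ≤ w e} := by
  refine le_antisymm ?_ ?_
  · refine csSup_le ⟨0, ∅, by simp, by simp⟩ ?_
    rintro x ⟨I, hI, rfl⟩
    rw [sum_w_eq w t ht I]
    refine Finset.sum_le_sum fun k _ => ?_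
    have hsub : (↑(I.filter (fun e => k ≤ w e)) : Set α) ⊆ {e | k ≤ w e} := by
      intro e he
      simp only [Finset.coe_filter, Set.mem_setOf_eq] at he
      exact he.2
    have hsub2 : (↑(I.filter (fun e => k ≤ w e)) : Set α) ⊆ ↑I := by
      intro x hx
      simp only [Finset.coe_filter, Set.mem_setOf_eq] at hx
      exact hx.1
    have hind : M.Indep (↑(I.filter (fun e => k ≤ w e)) : Set α) := hI.subset hsub2
    have := ncard_le_rank M hind hsub
    rwa [Set.ncard_coe_finset] at this
  · obtain ⟨I, hI, -, hIcard⟩ := chain_exists M hE w t t 1 (by omega)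
    have hfin : I.Finite := Set.toFinite I
    set F := hfin.toFinset with hF
    have hcoe : (↑F : Set α) = I := hfin.coe_toFinset
    have hmem : (∑ e ∈ F, w e) ∈
        {x : ℕ | ∃ I : Finset α, M.Indep (↑I : Set α) ∧ x = ∑ e ∈ I, w e} :=
      ⟨F, by rwa [hcoe], rfl⟩
    have hbdd : BddAbove {x : ℕ | ∃ I : Finset α, M.Indep (↑I : Set α) ∧ x = ∑ e ∈ I, w e} := by
      refine ⟨∑ e, w e, ?_⟩
      rintro x ⟨J, -, rfl⟩
      exact Finset.sum_le_sum_of_subset (Finset.subset_univ J)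
    have hle := le_csSup hbdd hmem
    have hval : ∑ e ∈ F, w e = ∑ k ∈ Finset.Icc 1 t, matroidRank M {e | k ≤ w e} := by
      rw [sum_w_eq w t ht F]
      refine Finset.sum_congr rfl fun k hk => ?_
      rw [Finset.mem_Icc] at hk
      rw [← hIcard k hk.1 hk.2]
      have : (↑(F.filter (fun e => k ≤ w e)) : Set α) = I ∩ {e | k ≤ w e} := by
        ext e
        simp only [hF, Finset.coe_filter, Set.Finite.mem_toFinset, Set.mem_setOf_eq,
          Set.mem_inter_iff]
      rw [← this, Set.ncard_coe_finset]
    rw [← hval]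
    exact hle

end Aux

theorem polymatroid_system_TDI
    {α : Type*} [Fintype α] (M : Matroid α) (hE : M.E = Set.univ) (w : α → ℕ) :
    ∃ y : Finset α → ℕ,
      (∀ e : α,
        w e ≤ ∑ S ∈ (Finset.univ : Finset (Finset α)).filter (fun S => e ∈ S), y S) ∧
      ∑ S : Finset α, matroidRank M ↑S * y S = matroidWorthNat M w := by
  set t := Finset.univ.sup w with htdef
  have ht : ∀ e, w e ≤ t := fun e => Finset.le_sup (Finset.mem_univ e)
  set thrF : ℕ → Finset α := fun k => Finset.univ.filter (fun e => k ≤ w e) with hthrF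
  have hthr_coe : ∀ k, (↑(thrF k) : Set α) = {e | k ≤ w e} := by
    intro k; ext e; simp [hthrF]
  refine ⟨fun S => ((Finset.Icc 1 t).filter (fun k => S = thrF k)).card, ?_, ?_⟩
  · intro e
    have : ∑ S ∈ (Finset.univ : Finset (Finset α)).filter (fun S => e ∈ S),
        ((Finset.Icc 1 t).filter (fun k => S = thrF k)).card
        = ∑ k ∈ Finset.Icc 1 t,
            if thrF k ∈ (Finset.univ : Finset (Finset α)).filter (fun S => e ∈ S)
            then 1 else 0 := by
      simp_rw [Finset.card_filter]
      rw [Finset.sum_comm]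
      refine Finset.sum_congr rfl fun k _ => ?_
      exact Finset.sum_ite_eq' _ (thrF k) (fun _ => 1)
    rw [this]
    have h2 : ∀ k ∈ Finset.Icc 1 t,
        (if thrF k ∈ (Finset.univ : Finset (Finset α)).filter (fun S => e ∈ S) then 1 else 0)
        = if k ≤ w e then 1 else 0 := by
      intro k _
      congr 1
      simp [hthrF]
    rw [Finset.sum_congr rfl h2]
    have : ∑ k ∈ Finset.Icc 1 t, (if k ≤ w e then 1 else 0)
        = ((Finset.Icc 1 t).filter (fun k => k ≤ w e)).card := by
      rw [Finset.card_filter]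
    rw [this]
    have h : (Finset.Icc 1 t).filter (fun k => k ≤ w e) = Finset.Icc 1 (w e) := by
      ext k
      simp only [Finset.mem_filter, Finset.mem_Icc]
      have := ht e; omega
    rw [h, Nat.card_Icc]; omega
  · have key : ∑ S : Finset α,
        matroidRank M ↑S * ((Finset.Icc 1 t).filter (fun k => S = thrF k)).card
        = ∑ k ∈ Finset.Icc 1 t, matroidRank M ↑(thrF k) := by
      simp_rw [Finset.card_filter, Finset.mul_sum, mul_ite, mul_one, mul_zero]
      rw [Finset.sum_comm]
      refine Finset.sum_congr rfl fun k _ => ?_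
      rw [Finset.sum_ite_eq' Finset.univ (thrF k) (fun S => matroidRank M ↑S)]
      simp
    rw [key]
    rw [worth_eq M hE w t ht]
    exact Finset.sum_congr rfl fun k _ => by rw [hthr_coe k]
end

section
/- For every finite perfect graph G = (V,E), the minimum number of cliques needed to cover all vertices of G equals the independence number α(G), the maximum size of a stable set of G. -/
/-- The independence number `α(G)`: the maximum size of a stable set. -/
noncomputable def indepNum {V : Type*} [Fintype V] (G : SimpleGraph V) : ℕ :=
  sSup {n : ℕ | ∃ S : Finset V, IsStableSet G (↑S : Set V) ∧ S.card = n}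

set_option linter.unusedSectionVars false
set_option linter.unusedVariables false

open Finset

namespace PerfectAux

variable {V : Type*} [Fintype V] [DecidableEq V] {G : SimpleGraph V}

/-- max card of a stable finset inside `T` -/
noncomputable def stN (G : SimpleGraph V) (T : Finset V) : ℕ :=
  sSup {n | ∃ S : Finset V, S ⊆ T ∧ IsStableSet G (↑S : Set V) ∧ S.card = n}

/-- max card of a clique finset inside `T` -/
noncomputable def clN (G : SimpleGraph V) (T : Finset V) : ℕ :=
  sSup {n | ∃ S : Finset V, S ⊆ T ∧ G.IsClique (↑S : Set V) ∧ S.card = n}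

lemma stN_bdd (G : SimpleGraph V) (T : Finset V) :
    BddAbove {n | ∃ S : Finset V, S ⊆ T ∧ IsStableSet G (↑S : Set V) ∧ S.card = n} :=
  ⟨T.card, fun n ⟨S, hS, _, hc⟩ => hc ▸ card_le_card hS⟩

lemma clN_bdd (G : SimpleGraph V) (T : Finset V) :
    BddAbove {n | ∃ S : Finset V, S ⊆ T ∧ G.IsClique (↑S : Set V) ∧ S.card = n} :=
  ⟨T.card, fun n ⟨S, hS, _, hc⟩ => hc ▸ card_le_card hS⟩

lemma stN_spec (G : SimpleGraph V) (T : Finset V) :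
    ∃ S : Finset V, S ⊆ T ∧ IsStableSet G (↑S : Set V) ∧ S.card = stN G T := by
  have h : stN G T ∈ {n | ∃ S : Finset V, S ⊆ T ∧ IsStableSet G (↑S : Set V) ∧ S.card = n} :=
    Nat.sSup_mem ⟨0, ∅, by simp [IsStableSet]⟩ (stN_bdd G T)
  exact h

lemma clN_spec (G : SimpleGraph V) (T : Finset V) :
    ∃ S : Finset V, S ⊆ T ∧ G.IsClique (↑S : Set V) ∧ S.card = clN G T := by
  have h : clN G T ∈ {n | ∃ S : Finset V, S ⊆ T ∧ G.IsClique (↑S : Set V) ∧ S.card = n} :=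
    Nat.sSup_mem ⟨0, ∅, by simp⟩ (clN_bdd G T)
  exact h

lemma le_stN {S T : Finset V} (hS : S ⊆ T) (h : IsStableSet G (↑S : Set V)) :
    S.card ≤ stN G T :=
  le_csSup (stN_bdd G T) ⟨S, hS, h, rfl⟩

lemma le_clN {S T : Finset V} (hS : S ⊆ T) (h : G.IsClique (↑S : Set V)) :
    S.card ≤ clN G T :=
  le_csSup (clN_bdd G T) ⟨S, hS, h, rfl⟩

lemma clN_mono {T T' : Finset V} (h : T ⊆ T') : clN G T ≤ clN G T' := by
  obtain ⟨S, hS, hc, hcard⟩ := clN_spec G T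
  exact hcard ▸ le_clN (hS.trans h) hc

/-- `T` can be properly colored with `t` colors. -/
def ColOn (G : SimpleGraph V) (T : Finset V) (t : ℕ) : Prop :=
  ∃ f : V → ℕ, (∀ v ∈ T, f v < t) ∧ ∀ u ∈ T, ∀ v ∈ T, G.Adj u v → f u ≠ f v

lemma inter_card_le_one {Q S : Finset V} (hQ : G.IsClique (↑Q : Set V))
    (hS : IsStableSet G (↑S : Set V)) : (Q ∩ S).card ≤ 1 := by
  rw [card_le_one]
  intro a ha b hb
  rw [mem_inter] at ha hb
  by_contra hab
  exact hS (by exact_mod_cast ha.2) (by exact_mod_cast hb.2) hab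
    (hQ (by exact_mod_cast ha.1) (by exact_mod_cast hb.1) hab)
lemma class_stable {D : Finset V} {f : V → ℕ}
    (hf2 : ∀ u ∈ D, ∀ v ∈ D, G.Adj u v → f u ≠ f v) (j : ℕ) :
    IsStableSet G (↑(D.filter fun u => f u = j) : Set V) := by
  intro u hu v hv huv hadj
  simp only [coe_filter, Set.mem_setOf_eq] at hu hv
  exact hf2 u hu.1 v hv.1 hadj (hu.2.trans hv.2.symm)

lemma zcount {D Q : Finset V} {f : V → ℕ} {t : ℕ} (hQD : Q ⊆ D)
    (hQ : G.IsClique (↑Q : Set V))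
    (hf1 : ∀ v ∈ D, f v < t) (hf2 : ∀ u ∈ D, ∀ v ∈ D, G.Adj u v → f u ≠ f v) :
    Q.card + ((range t).filter fun j => Q ∩ D.filter (fun u => f u = j) = ∅).card = t := by
  have hle : ∀ j, (Q ∩ D.filter (fun u => f u = j)).card ≤ 1 :=
    fun j => inter_card_le_one hQ (class_stable hf2 j)
  have hQeq : (range t).biUnion (fun j => Q ∩ D.filter (fun u => f u = j)) = Q := by
    ext v
    simp only [mem_biUnion, mem_inter, mem_filter, mem_range]
    constructor
    · rintro ⟨j, _, hvQ, _⟩; exact hvQ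
    · intro hvQ; exact ⟨f v, hf1 v (hQD hvQ), hvQ, hQD hvQ, rfl⟩
  have hdisj : ∀ j ∈ range t, ∀ j' ∈ range t, j ≠ j' →
      Disjoint (Q ∩ D.filter (fun u => f u = j)) (Q ∩ D.filter (fun u => f u = j')) := by
    intro j _ j' _ hjj'
    rw [disjoint_left]
    intro v hv hv'
    simp only [mem_inter, mem_filter] at hv hv'
    exact hjj' (hv.2.2.symm.trans hv'.2.2)
  have hsum : ∑ j ∈ range t, (Q ∩ D.filter (fun u => f u = j)).card = Q.card := by
    rw [← card_biUnion hdisj, hQeq]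
  have hsplit := sum_filter_add_sum_filter_not (range t)
    (fun j => Q ∩ D.filter (fun u => f u = j) = ∅)
    (fun j => (Q ∩ D.filter (fun u => f u = j)).card)
  have h0 : ∑ j ∈ (range t).filter (fun j => Q ∩ D.filter (fun u => f u = j) = ∅),
      (Q ∩ D.filter (fun u => f u = j)).card = 0 := by
    apply sum_eq_zero
    intro j hj
    rw [mem_filter] at hj
    rw [hj.2, card_empty]
  have h1 : ∑ j ∈ (range t).filter (fun j => ¬ (Q ∩ D.filter (fun u => f u = j) = ∅)),
      (Q ∩ D.filter (fun u => f u = j)).card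
      = ((range t).filter (fun j => ¬ (Q ∩ D.filter (fun u => f u = j) = ∅))).card := by
    rw [card_eq_sum_ones]
    apply sum_congr rfl
    intro j hj
    rw [mem_filter] at hj
    have := hle j
    have hne : (Q ∩ D.filter (fun u => f u = j)).card ≠ 0 := by
      rw [Ne, card_eq_zero]; exact hj.2
    omega
  have hcards := card_filter_add_card_filter_not
    (s := range t) (p := fun j => Q ∩ D.filter (fun u => f u = j) = ∅)
  rw [card_range] at hcards
  omega
lemma ind_sum {A B T : Finset V} (hA : A ⊆ T) :
    ∑ x : {y // y ∈ T}, (if (x : V) ∈ A then (1:ℚ) else 0) * (if (x : V) ∈ B then 1 else 0)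
      = ((A ∩ B).card : ℚ) := by
  have h1 : ∀ x : {y // y ∈ T},
      (if (x : V) ∈ A then (1:ℚ) else 0) * (if (x : V) ∈ B then 1 else 0)
      = if (x : V) ∈ A ∩ B then 1 else 0 := by
    intro x
    by_cases hxA : (x : V) ∈ A <;> by_cases hxB : (x : V) ∈ B <;>
      simp [hxA, hxB, mem_inter]
  rw [Finset.sum_congr rfl fun x _ => h1 x, Finset.sum_boole]
  congr 1
  apply Finset.card_bij (fun (x : {y // y ∈ T}) _ => (x : V))
  · intro x hx
    simpa using (Finset.mem_filter.1 hx).2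
  · intro x hx y hy hxy
    exact Subtype.ext hxy
  · intro b hb
    have hbT : b ∈ T := hA (Finset.mem_inter.1 hb).1
    exact ⟨⟨b, hbT⟩, Finset.mem_filter.2 ⟨Finset.mem_univ _, hb⟩, rfl⟩

lemma key (G : SimpleGraph V) (hsmall : ∀ T : Finset V, T.card ≤ stN G T * clN G T) :
    ∀ T : Finset V, ColOn G T (clN G T) := by
  intro T
  induction T using Finset.strongInductionOn with
  | _ T IH =>
  by_contra hcon
  have hTne : T.Nonempty := by
    rcases T.eq_empty_or_nonempty with h | h
    · exact absurd ⟨fun _ => 0, by simp [h], by simp [h]⟩ hcon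
    · exact h
  obtain ⟨v₀, hv₀⟩ := hTne
  set ω := clN G T with hωdef
  set α := stN G T with hαdef
  have hω1 : 1 ≤ ω := by
    have := le_clN (G := G) (S := {v₀}) (T := T) (by simpa) (by simp)
    simpa using this
  have hα1 : 1 ≤ α := by
    have := le_stN (G := G) (S := {v₀}) (T := T) (by simpa)
      (by simp [IsStableSet])
    simpa using this
  -- For every stable S ⊆ T there is an ω-clique inside T \ S.
  have sub : ∀ S, S ⊆ T → IsStableSet G (↑S : Set V) →
      ∃ Q, Q ⊆ T \ S ∧ G.IsClique (↑Q : Set V) ∧ Q.card = ω := by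
    intro S hST hS
    by_cases hb : ω ≤ clN G (T \ S)
    · obtain ⟨Q, hQsub, hQc, hQcard⟩ := clN_spec G (T \ S)
      obtain ⟨Q', hQ'Q, hQ'card⟩ := Q.exists_subset_card_eq (hQcard ▸ hb)
      exact ⟨Q', hQ'Q.trans hQsub, hQc.subset (by exact_mod_cast hQ'Q), hQ'card⟩
    · push_neg at hb
      have hSne : S.Nonempty := by
        rcases S.eq_empty_or_nonempty with h | h
        · subst h
          rw [sdiff_empty] at hb
          exact absurd rfl hb.ne
        · exact h
      obtain ⟨f, hf1, hf2⟩ := IH _ (sdiff_ssubset hST hSne)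
      refine absurd ⟨fun v => if v ∈ S then ω - 1 else f v, ?_, ?_⟩ hcon
      · intro v hv
        by_cases hvS : v ∈ S
        · simp only [if_pos hvS]; omega
        · simp only [if_neg hvS]
          have := hf1 v (mem_sdiff.2 ⟨hv, hvS⟩)
          omega
      · intro u hu v hv hadj
        by_cases huS : u ∈ S <;> by_cases hvS : v ∈ S
        · exact absurd hadj (hS (mem_coe.2 huS) (mem_coe.2 hvS) hadj.ne)
        · have := hf1 v (mem_sdiff.2 ⟨hv, hvS⟩)
          simp only [if_pos huS, if_neg hvS]
          omega
        · have := hf1 u (mem_sdiff.2 ⟨hu, huS⟩)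
          simp only [if_neg huS, if_pos hvS]
          omega
        · simp only [if_neg huS, if_neg hvS]
          exact hf2 u (mem_sdiff.2 ⟨hu, huS⟩) v (mem_sdiff.2 ⟨hv, hvS⟩) hadj
  obtain ⟨S₀, hS₀T, hS₀st, hS₀card⟩ := stN_spec G T
  -- a coloring of `T.erase x` with (at most) ω colors, for each x ∈ S₀
  have hcolx : ∀ x : {y // y ∈ S₀}, ∃ f : V → ℕ,
      (∀ v ∈ T.erase (x : V), f v < ω) ∧
      ∀ u ∈ T.erase (x : V), ∀ v ∈ T.erase (x : V), G.Adj u v → f u ≠ f v := by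
    intro x
    obtain ⟨f, h1, h2⟩ := IH _ (erase_ssubset (hS₀T x.2))
    exact ⟨f, fun v hv => lt_of_lt_of_le (h1 v hv) (clN_mono (erase_subset _ _)), h2⟩
  choose F hF1 hF2 using hcolx
  -- the α·ω+1 stable sets
  set I := Option ({y // y ∈ S₀} × Fin ω) with hIdef
  set Sfam : I → Finset V := fun i => match i with
    | none => S₀
    | some (x, j) => (T.erase (x : V)).filter (fun u => F x u = (j : ℕ)) with hSfam
  have SfamT : ∀ i, Sfam i ⊆ T := by
    rintro (_ | ⟨x, j⟩)
    · exact hS₀T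
    · exact (filter_subset _ _).trans (erase_subset _ _)
  have Sfamst : ∀ i, IsStableSet G (↑(Sfam i) : Set V) := by
    rintro (_ | ⟨x, j⟩)
    · exact hS₀st
    · exact class_stable (hF2 x) _
  choose Qf hQf1 hQfc hQfcard using fun i => sub (Sfam i) (SfamT i) (Sfamst i)
  have hQfT : ∀ i, Qf i ⊆ T := fun i => (hQf1 i).trans sdiff_subset
  have hdisj0 : ∀ i, Qf i ∩ Sfam i = ∅ := by
    intro i
    rw [← Finset.disjoint_iff_inter_eq_empty]
    exact Finset.disjoint_left.2 fun a haQ haS => (mem_sdiff.1 (hQf1 i haQ)).2 haS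
  -- row lemmas
  have rowfull : ∀ Q : Finset V, Q ⊆ T → G.IsClique (↑Q : Set V) → Q.card = ω →
      ∀ x : {y // y ∈ S₀}, (x : V) ∉ Q → ∀ j : ℕ, j < ω →
      (Q ∩ (T.erase (x : V)).filter (fun u => F x u = j)).card = 1 := by
    intro Q hQT hQc hQcard x hxQ j hj
    have hQD : Q ⊆ T.erase (x : V) := fun v hv =>
      mem_erase.2 ⟨fun h => hxQ (h ▸ hv), hQT hv⟩
    have hz := zcount hQD hQc (hF1 x) (hF2 x)
    rw [hQcard] at hz
    have hZ : ((range ω).filter fun n =>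
        Q ∩ (T.erase (x : V)).filter (fun u => F x u = n) = ∅) = ∅ :=
      card_eq_zero.1 (by omega)
    have hne : Q ∩ (T.erase (x : V)).filter (fun u => F x u = j) ≠ ∅ := by
      intro h
      have hmem : j ∈ (range ω).filter fun n =>
          Q ∩ (T.erase (x : V)).filter (fun u => F x u = n) = ∅ :=
        mem_filter.2 ⟨mem_range.2 hj, h⟩
      rw [hZ] at hmem
      exact absurd hmem (notMem_empty j)
    have hle := inter_card_le_one hQc (class_stable (hF2 x) j)
    have hpos : 0 < (Q ∩ (T.erase (x : V)).filter (fun u => F x u = j)).card :=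
      card_pos.2 (nonempty_of_ne_empty hne)
    omega
  have rowone : ∀ Q : Finset V, Q ⊆ T → G.IsClique (↑Q : Set V) → Q.card = ω →
      ∀ x : {y // y ∈ S₀}, (x : V) ∈ Q →
      ((range ω).filter fun n =>
        Q ∩ (T.erase (x : V)).filter (fun u => F x u = n) = ∅).card = 1 := by
    intro Q hQT hQc hQcard x hxQ
    have hQD : Q.erase (x : V) ⊆ T.erase (x : V) := erase_subset_erase _ hQT
    have hsubQ : Q.erase (x : V) ⊆ Q := erase_subset _ _
    have hz := zcount hQD (hQc.subset (by exact_mod_cast hsubQ)) (hF1 x) (hF2 x)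
    rw [card_erase_of_mem hxQ, hQcard] at hz
    have haux : ∀ n : ℕ, Q ∩ (T.erase (x : V)).filter (fun u => F x u = n)
        = (Q.erase (x : V)) ∩ (T.erase (x : V)).filter (fun u => F x u = n) := by
      intro n
      ext u
      simp only [mem_inter, mem_filter, mem_erase]
      constructor
      · rintro ⟨h1, h2⟩; exact ⟨⟨h2.1.1, h1⟩, h2⟩
      · rintro ⟨h1, h2⟩; exact ⟨h1.2, h2⟩
    have hfe : ((range ω).filter fun n =>
          Q ∩ (T.erase (x : V)).filter (fun u => F x u = n) = ∅)
        = ((range ω).filter fun n =>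
          (Q.erase (x : V)) ∩ (T.erase (x : V)).filter (fun u => F x u = n) = ∅) :=
      filter_congr fun n _ => by rw [haux n]
    rw [hfe]
    omega
  -- the intersection matrix
  have M : ∀ i i', ((Qf i ∩ Sfam i').card : ℕ) = if i' = i then 0 else 1 := by
    intro i i'
    rcases eq_or_ne i' i with rfl | hne
    · rw [if_pos rfl, card_eq_zero]
      exact hdisj0 i'
    · rw [if_neg hne]
      match i, i' with
      | none, none => exact absurd rfl hne
      | none, some (x, j) =>
        have hxQ : (x : V) ∉ Qf none := by
          intro h
          have : (x : V) ∈ Qf none ∩ S₀ := mem_inter.2 ⟨h, x.2⟩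
          rw [show Qf none ∩ S₀ = ∅ from hdisj0 none] at this
          exact absurd this (notMem_empty _)
        exact rowfull (Qf none) (hQfT none) (hQfc none) (hQfcard none) x hxQ j j.isLt
      | some (x, j), i' =>
        have hxQ : (x : V) ∈ Qf (some (x, j)) := by
          by_contra hxQ
          have h1 := rowfull _ (hQfT (some (x,j))) (hQfc _) (hQfcard _) x hxQ (j : ℕ) j.isLt
          have h0 : (Qf (some (x,j)) ∩ (T.erase (x : V)).filter
              (fun u => F x u = (j : ℕ))).card = 0 := card_eq_zero.2 (hdisj0 (some (x,j)))
          omega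
        match i' with
        | none =>
          have hle := inter_card_le_one (hQfc (some (x,j))) hS₀st
          have hpos : 0 < (Qf (some (x,j)) ∩ S₀).card :=
            card_pos.2 ⟨(x : V), mem_inter.2 ⟨hxQ, x.2⟩⟩
          show (Qf (some (x,j)) ∩ S₀).card = 1
          omega
        | some (x', j') =>
          by_cases hxx' : x' = x
          · subst hxx'
            have hjj' : (j' : ℕ) ≠ (j : ℕ) := by
              intro h
              exact hne (by rw [Fin.val_injective h])
            have hZ1 := rowone _ (hQfT (some (x',j))) (hQfc _) (hQfcard _) x' hxQ
            have hjZ : (j : ℕ) ∈ (range ω).filter fun n =>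
                Qf (some (x',j)) ∩ (T.erase (x' : V)).filter (fun u => F x' u = n) = ∅ :=
              mem_filter.2 ⟨mem_range.2 j.isLt, hdisj0 (some (x',j))⟩
            obtain ⟨b, hb⟩ := card_eq_one.1 hZ1
            have hbj : (j : ℕ) = b := by
              have := hjZ
              rw [hb, mem_singleton] at this
              exact this
            have hj'Z : (j' : ℕ) ∉ (range ω).filter fun n =>
                Qf (some (x',j)) ∩ (T.erase (x' : V)).filter (fun u => F x' u = n) = ∅ := by
              rw [hb, mem_singleton, ← hbj]
              exact hjj'
            have hne' : Qf (some (x',j)) ∩ (T.erase (x' : V)).filter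
                (fun u => F x' u = (j' : ℕ)) ≠ ∅ := by
              intro h
              exact hj'Z (mem_filter.2 ⟨mem_range.2 j'.isLt, h⟩)
            have hle := inter_card_le_one (hQfc (some (x',j)))
              (class_stable (hF2 x') (j' : ℕ))
            have hpos : 0 < (Qf (some (x',j)) ∩ (T.erase (x' : V)).filter
                (fun u => F x' u = (j' : ℕ))).card :=
              card_pos.2 (nonempty_of_ne_empty hne')
            show (Qf (some (x',j)) ∩ (T.erase (x' : V)).filter
                (fun u => F x' u = (j' : ℕ))).card = 1
            omega
          · have hxx'' : (x' : V) ≠ (x : V) := fun h => hxx' (Subtype.ext h)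
            have hx'Q : (x' : V) ∉ Qf (some (x, j)) := by
              intro h
              have h2 : 1 < (Qf (some (x,j)) ∩ S₀).card :=
                one_lt_card.2 ⟨(x' : V), mem_inter.2 ⟨h, x'.2⟩,
                  (x : V), mem_inter.2 ⟨hxQ, x.2⟩, hxx''⟩
              have hle := inter_card_le_one (hQfc (some (x,j))) hS₀st
              omega
            exact rowfull _ (hQfT (some (x,j))) (hQfc _) (hQfcard _) x' hx'Q (j' : ℕ) j'.isLt
  -- linear independence of the indicator vectors
  have hli : LinearIndependent ℚ
      (fun i (x : {y // y ∈ T}) => if (x : V) ∈ Sfam i then (1:ℚ) else 0) := by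
    rw [Fintype.linearIndependent_iff]
    intro a ha
    have dot : ∀ i, (∑ i', a i' * ((Qf i ∩ Sfam i').card : ℚ)) = 0 := by
      intro i
      have hz : ∀ x : {y // y ∈ T},
          (∑ i', a i' • fun (x : {y // y ∈ T}) => if (x : V) ∈ Sfam i' then (1:ℚ) else 0) x
            = 0 := by
        intro x
        rw [ha]
        rfl
      have hz' : ∀ x : {y // y ∈ T},
          ∑ i', a i' * (if (x : V) ∈ Sfam i' then (1:ℚ) else 0) = 0 := by
        intro x
        have := hz x
        simpa [Finset.sum_apply] using this
      have h0 : ∑ x : {y // y ∈ T}, (if (x : V) ∈ Qf i then (1:ℚ) else 0) *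
          (∑ i', a i' * (if (x : V) ∈ Sfam i' then (1:ℚ) else 0)) = 0 := by
        apply Finset.sum_eq_zero
        intro x _
        rw [hz' x, mul_zero]
      calc ∑ i', a i' * ((Qf i ∩ Sfam i').card : ℚ)
          = ∑ i', a i' * ∑ x : {y // y ∈ T},
              (if (x : V) ∈ Qf i then (1:ℚ) else 0) *
              (if (x : V) ∈ Sfam i' then (1:ℚ) else 0) := by
            refine Finset.sum_congr rfl fun i' _ => ?_
            rw [ind_sum (hQfT i)]
        _ = ∑ i', ∑ x : {y // y ∈ T}, (if (x : V) ∈ Qf i then (1:ℚ) else 0) *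
              (a i' * (if (x : V) ∈ Sfam i' then (1:ℚ) else 0)) := by
            refine Finset.sum_congr rfl fun i' _ => ?_
            rw [Finset.mul_sum]
            refine Finset.sum_congr rfl fun x _ => ?_
            ring
        _ = ∑ x : {y // y ∈ T}, ∑ i', (if (x : V) ∈ Qf i then (1:ℚ) else 0) *
              (a i' * (if (x : V) ∈ Sfam i' then (1:ℚ) else 0)) := Finset.sum_comm
        _ = ∑ x : {y // y ∈ T}, (if (x : V) ∈ Qf i then (1:ℚ) else 0) *
              (∑ i', a i' * (if (x : V) ∈ Sfam i' then (1:ℚ) else 0)) := by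
            refine Finset.sum_congr rfl fun x _ => ?_
            rw [Finset.mul_sum]
        _ = 0 := h0
    have heq : ∀ i, a i = ∑ i', a i' := by
      intro i
      have hd := dot i
      have : ∑ i', a i' * ((Qf i ∩ Sfam i').card : ℚ)
          = (∑ i', a i') - a i := by
        have : ∀ i', a i' * ((Qf i ∩ Sfam i').card : ℚ)
            = a i' - (if i' = i then a i' else 0) := by
          intro i'
          rw [M i i']
          by_cases h : i' = i <;> simp [h]
        rw [Finset.sum_congr rfl fun i' _ => this i']
        rw [Finset.sum_sub_distrib, Finset.sum_ite_eq' Finset.univ i a]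
        simp
      rw [this] at hd
      linarith
    have hsig : (∑ i', a i') = 0 := by
      have h1 : (∑ i', a i') = (Fintype.card I : ℚ) * (∑ i', a i') := by
        conv_lhs => rw [Finset.sum_congr rfl fun i _ => heq i]
        rw [Finset.sum_const, Finset.card_univ]
        simp [mul_comm]
      have hcI : Fintype.card I = α * ω + 1 := by
        simp [hIdef, Fintype.card_option, Fintype.card_prod, Fintype.card_coe,
          Fintype.card_fin, hS₀card]
        exact Or.inl hαdef.symm
      rw [hcI] at h1
      have h2 : ((α * ω : ℕ) : ℚ) * (∑ i', a i') = 0 := by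
        push_cast at h1 ⊢
        linarith
      have h3 : ((α * ω : ℕ) : ℚ) ≠ 0 :=
        Nat.cast_ne_zero.2 (Nat.mul_ne_zero (by omega) (by omega))
      exact (mul_eq_zero.1 h2).resolve_left h3
    intro i
    rw [heq i, hsig]
  have hcard := hli.fintype_card_le_finrank
  rw [Module.finrank_pi ℚ] at hcard
  have h1 : Fintype.card I = α * ω + 1 := by
    simp [hIdef, Fintype.card_option, Fintype.card_prod, Fintype.card_coe,
      Fintype.card_fin, hS₀card]
    exact Or.inl hαdef.symm
  have h2 : Fintype.card {y // y ∈ T} = T.card := Fintype.card_coe T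
  have h3 := hsmall T
  rw [h1, h2] at hcard
  rw [← hαdef, ← hωdef] at h3
  omega

lemma stable_compl_iff (G : SimpleGraph V) (s : Set V) :
    IsStableSet Gᶜ s ↔ G.IsClique s := by
  constructor
  · intro h x hx y hy hxy
    by_contra hadj
    exact h hx hy hxy ((G.compl_adj x y).2 ⟨hxy, hadj⟩)
  · intro h x hx y hy hxy hadj
    exact ((G.compl_adj x y).1 hadj).2 (h hx hy hxy)

lemma clique_compl_iff (G : SimpleGraph V) (s : Set V) :
    Gᶜ.IsClique s ↔ IsStableSet G s := by
  constructor
  · intro h x hx y hy hxy hadj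
    exact ((G.compl_adj x y).1 (h hx hy hxy)).2 hadj
  · intro h x hx y hy hxy
    exact (G.compl_adj x y).2 ⟨hxy, h hx hy hxy⟩

lemma stN_compl (G : SimpleGraph V) (T : Finset V) : stN Gᶜ T = clN G T := by
  unfold stN clN
  congr 1
  ext n
  constructor <;> rintro ⟨S, h1, h2, h3⟩
  · exact ⟨S, h1, (stable_compl_iff G _).1 h2, h3⟩
  · exact ⟨S, h1, (stable_compl_iff G _).2 h2, h3⟩

lemma clN_compl (G : SimpleGraph V) (T : Finset V) : clN Gᶜ T = stN G T := by
  unfold stN clN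
  congr 1
  ext n
  constructor <;> rintro ⟨S, h1, h2, h3⟩
  · exact ⟨S, h1, (clique_compl_iff G _).1 h2, h3⟩
  · exact ⟨S, h1, (clique_compl_iff G _).2 h2, h3⟩

lemma indepNum_eq (G : SimpleGraph V) : indepNum G = stN G univ := by
  unfold indepNum stN
  congr 1
  ext n
  constructor
  · rintro ⟨S, h1, h2⟩
    exact ⟨S, subset_univ S, h1, h2⟩
  · rintro ⟨S, _, h1, h2⟩
    exact ⟨S, h1, h2⟩

lemma card_le_of_perfect {G : SimpleGraph V} (hG : IsPerfect G) (T : Finset V) :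
    T.card ≤ stN G T * clN G T := by
  haveI : Fintype ↥(↑T : Set V) := FinsetCoe.fintype T
  have hperf := hG (↑T : Set V)
  set H := G.induce (↑T : Set V) with hH
  set w := H.cliqueNum with hw
  have hcol : H.Colorable w :=
    SimpleGraph.chromaticNumber_le_iff_colorable.1 (le_of_eq hperf)
  obtain ⟨c⟩ := hcol
  set f : V → ℕ := fun v => if h : v ∈ T then (c ⟨v, by simpa using h⟩ : ℕ) else 0 with hf
  have hf1 : ∀ v ∈ T, f v < w := by
    intro v hv
    simp only [hf, dif_pos hv]
    exact (c ⟨v, by simpa using hv⟩).isLt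
  have hf2 : ∀ u ∈ T, ∀ v ∈ T, G.Adj u v → f u ≠ f v := by
    intro u hu v hv hadj heq
    have hadj' : H.Adj ⟨u, by simpa using hu⟩ ⟨v, by simpa using hv⟩ := by
      simp only [hH, SimpleGraph.comap_adj, Function.Embedding.coe_subtype]
      exact hadj
    apply c.valid hadj'
    apply Fin.ext
    simpa only [hf, dif_pos hu, dif_pos hv] using heq
  have hsum : ∑ j ∈ range w, (T.filter (fun u => f u = j)).card = T.card := by
    have hdisj : ∀ j ∈ range w, ∀ j' ∈ range w, j ≠ j' →
        Disjoint (T.filter (fun u => f u = j)) (T.filter (fun u => f u = j')) := by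
      intro j _ j' _ hjj'
      rw [disjoint_left]
      intro v hv hv'
      rw [mem_filter] at hv hv'
      exact hjj' (hv.2.symm.trans hv'.2)
    rw [← card_biUnion hdisj]
    congr 1
    ext v
    simp only [mem_biUnion, mem_filter, mem_range]
    constructor
    · rintro ⟨j, _, hv, _⟩; exact hv
    · intro hv; exact ⟨f v, hf1 v hv, hv, rfl⟩
  have hle : ∀ j ∈ range w, (T.filter (fun u => f u = j)).card ≤ stN G T :=
    fun j _ => le_stN (filter_subset _ _) (class_stable hf2 j)
  have hT : T.card ≤ w * stN G T := by
    calc T.card = ∑ j ∈ range w, (T.filter (fun u => f u = j)).card := hsum.symm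
      _ ≤ ∑ _j ∈ range w, stN G T := Finset.sum_le_sum hle
      _ = w * stN G T := by rw [Finset.sum_const, card_range, smul_eq_mul]
  have hwcl : w ≤ clN G T := by
    obtain ⟨s, hs⟩ := H.exists_isNClique_cliqueNum
    have hsub : s.map ⟨Subtype.val, Subtype.val_injective⟩ ⊆ T := by
      intro v hv
      obtain ⟨x, _, rfl⟩ := Finset.mem_map.1 hv
      simpa using x.2
    have hclq : G.IsClique (↑(s.map ⟨Subtype.val, Subtype.val_injective⟩) : Set V) := by
      intro a ha b hb hab
      simp only [coe_map, Set.mem_image, mem_coe, Function.Embedding.coeFn_mk] at ha hb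
      obtain ⟨x, hx, rfl⟩ := ha
      obtain ⟨y, hy, rfl⟩ := hb
      have hxy : x ≠ y := fun h => hab (by rw [h])
      exact hs.1 (mem_coe.2 hx) (mem_coe.2 hy) hxy
    have := le_clN hsub hclq
    rwa [Finset.card_map, hs.2] at this
  calc T.card ≤ w * stN G T := hT
    _ ≤ clN G T * stN G T := Nat.mul_le_mul_right _ hwcl
    _ = stN G T * clN G T := Nat.mul_comm _ _

end PerfectAux

theorem perfect_graph_clique_cover_eq_indepNum
    {V : Type*} [Fintype V] (G : SimpleGraph V) (hG : IsPerfect G) :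
    IsLeast
      {n : ℕ | ∃ C : Finset (Finset V),
        (∀ Q ∈ C, G.IsClique (↑Q : Set V)) ∧ (∀ v : V, ∃ Q ∈ C, v ∈ Q) ∧ n = C.card}
      (indepNum G) := by
  classical
  open Finset PerfectAux in
  have hsmall : ∀ T : Finset V, T.card ≤ stN Gᶜ T * clN Gᶜ T := by
    intro T
    rw [stN_compl, clN_compl, Nat.mul_comm]
    exact card_le_of_perfect hG T
  obtain ⟨f, hf1, hf2⟩ := PerfectAux.key Gᶜ hsmall Finset.univ
  set α := PerfectAux.clN Gᶜ Finset.univ with hα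
  have hαeq : α = indepNum G := by
    rw [hα, PerfectAux.clN_compl, ← PerfectAux.indepNum_eq]
  have lower : ∀ n ∈ {n : ℕ | ∃ C : Finset (Finset V),
      (∀ Q ∈ C, G.IsClique (↑Q : Set V)) ∧ (∀ v : V, ∃ Q ∈ C, v ∈ Q) ∧ n = C.card},
      indepNum G ≤ n := by
    rintro n ⟨C, hCq, hCcov, rfl⟩
    obtain ⟨S, _, hSst, hScard⟩ := PerfectAux.stN_spec G Finset.univ
    rw [PerfectAux.indepNum_eq, ← hScard]
    choose g hg1 hg2 using hCcov
    apply Finset.card_le_card_of_injOn g (fun a _ => hg1 a)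
    intro u hu v hv huv
    by_contra hne
    exact hSst hu hv hne
      (hCq (g u) (hg1 u) (Finset.mem_coe.2 (hg2 u)) (Finset.mem_coe.2 (huv ▸ hg2 v)) hne)
  set C : Finset (Finset V) :=
    (Finset.range α).image (fun j => Finset.univ.filter (fun v => f v = j)) with hC
  have hCq : ∀ Q ∈ C, G.IsClique (↑Q : Set V) := by
    intro Q hQ
    obtain ⟨j, _, rfl⟩ := Finset.mem_image.1 hQ
    intro u hu v hv huv
    simp only [Finset.coe_filter, Set.mem_setOf_eq, Finset.mem_univ, true_and] at hu hv
    by_contra hadj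
    exact hf2 u (Finset.mem_univ u) v (Finset.mem_univ v)
      ((G.compl_adj u v).2 ⟨huv, hadj⟩) (hu.trans hv.symm)
  have hCcov : ∀ v : V, ∃ Q ∈ C, v ∈ Q := by
    intro v
    refine ⟨Finset.univ.filter (fun u => f u = f v), ?_, ?_⟩
    · exact Finset.mem_image.2 ⟨f v, Finset.mem_range.2 (hf1 v (Finset.mem_univ v)), rfl⟩
    · exact Finset.mem_filter.2 ⟨Finset.mem_univ v, rfl⟩
  have hup : C.card ≤ indepNum G := by
    rw [← hαeq]
    exact Finset.card_image_le.trans (le_of_eq (Finset.card_range α))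
  have hdown := lower C.card ⟨C, hCq, hCcov, rfl⟩
  exact ⟨⟨C, hCq, hCcov, le_antisymm hdown hup⟩, lower⟩
end

section
/- (Clique game over perfect graphs) Let G = (V,E) be a finite perfect graph with nonnegative real vertex weights w. A function y assigning a nonnegative real y_S to each nonempty stable set S of G is in the core of the clique game on (G,w) if and only if y is an optimal solution of the dual LP, i.e., Σ_{S : v ∈ S} y_S ≥ w(v) for every vertex v, and Σ_S y_S is minimum among all nonnegative functions on the nonempty stable sets satisfying these constraints. -/
open scoped Classical

/-- `worth(T)` for the clique game: the maximum total weight of a clique contained in `T`. -/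
noncomputable def cliqueWorth {V : Type*} [Fintype V] (G : SimpleGraph V) (w : V → ℝ)
    (T : Set V) : ℝ :=
  sSup {x : ℝ | ∃ Q : Finset V, ↑Q ⊆ T ∧ G.IsClique (↑Q : Set V) ∧ x = ∑ v ∈ Q, w v}

/-- The nonempty stable sets of `G`, as a finset of finsets. -/
noncomputable def stableSetsOf {V : Type*} [Fintype V] (G : SimpleGraph V) :
    Finset (Finset V) :=
  Finset.univ.filter fun S => S.Nonempty ∧ IsStableSet G (↑S : Set V)

namespace CGP
open SimpleGraph Finset
set_option linter.unusedSectionVars false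
set_option linter.unusedVariables false
set_option maxHeartbeats 1000000

variable {V : Type*} [Fintype V] {G : SimpleGraph V} {w : V → ℝ} {T : Set V}

lemma worth_set_finite (G : SimpleGraph V) (w : V → ℝ) (T : Set V) :
    {x : ℝ | ∃ Q : Finset V, ↑Q ⊆ T ∧ G.IsClique (↑Q : Set V) ∧ x = ∑ v ∈ Q, w v}.Finite := by
  apply (Set.finite_range (fun Q : Finset V => ∑ v ∈ Q, w v)).subset
  rintro x ⟨Q, -, -, rfl⟩
  exact ⟨Q, rfl⟩

lemma le_cliqueWorth {Q : Finset V} (hQT : ↑Q ⊆ T) (hQ : G.IsClique (↑Q : Set V)) :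
    ∑ v ∈ Q, w v ≤ cliqueWorth G w T :=
  le_csSup (worth_set_finite G w T).bddAbove ⟨Q, hQT, hQ, rfl⟩

lemma exists_cliqueWorth (G : SimpleGraph V) (w : V → ℝ) (T : Set V) :
    ∃ Q : Finset V, ↑Q ⊆ T ∧ G.IsClique (↑Q : Set V) ∧ cliqueWorth G w T = ∑ v ∈ Q, w v := by
  have hne : {x : ℝ | ∃ Q : Finset V, ↑Q ⊆ T ∧ G.IsClique (↑Q : Set V) ∧ x = ∑ v ∈ Q, w v}.Nonempty :=
    ⟨0, ∅, by simp, by simp [SimpleGraph.isClique_empty]⟩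
  exact hne.csSup_mem (worth_set_finite G w T)

lemma cliqueWorth_nonneg (G : SimpleGraph V) (w : V → ℝ) (T : Set V) :
    0 ≤ cliqueWorth G w T := by
  simpa using le_cliqueWorth (G := G) (w := w) (T := T) (Q := ∅) (by simp) (by simp)

lemma cliqueWorth_singleton (G : SimpleGraph V) (w : V → ℝ) (hw : ∀ v, 0 ≤ w v) (v : V) :
    cliqueWorth G w {v} = w v := by
  obtain ⟨Q, hQT, hQ, hval⟩ := exists_cliqueWorth G w {v}
  have h1 : cliqueWorth G w {v} ≤ w v := by
    rw [hval]
    have : Q ⊆ {v} := by intro a ha; simpa using hQT ha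
    calc ∑ u ∈ Q, w u ≤ ∑ u ∈ {v}, w u := Finset.sum_le_sum_of_subset_of_nonneg this (by intro i _ _; exact hw i)
    _ = w v := by simp
  have h2 : w v ≤ cliqueWorth G w {v} := by
    have := le_cliqueWorth (G := G) (w := w) (T := ({v} : Set V)) (Q := {v}) (by simp) (by simp)
    simpa using this
  linarith

lemma mem_stableSetsOf {S : Finset V} :
    S ∈ stableSetsOf G ↔ S.Nonempty ∧ IsStableSet G (↑S : Set V) := by
  simp [stableSetsOf]

lemma stable_clique_inter {S Q : Finset V} (hS : IsStableSet G (↑S : Set V))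
    (hQ : G.IsClique (↑Q : Set V)) : (S ∩ Q).card ≤ 1 := by
  rw [Finset.card_le_one]
  intro a ha b hb
  simp only [Finset.mem_inter] at ha hb
  by_contra hne
  exact hS (Finset.mem_coe.mpr ha.1) (Finset.mem_coe.mpr hb.1) hne
    (hQ (Finset.mem_coe.mpr ha.2) (Finset.mem_coe.mpr hb.2) hne)

/-- Weak duality against a single clique. -/
lemma clique_le_filter_sum (y' : Finset V → ℝ) (hy' : ∀ S ∈ stableSetsOf G, 0 ≤ y' S)
    (hfeas : ∀ v : V, w v ≤ ∑ S ∈ (stableSetsOf G).filter (fun S => v ∈ S), y' S)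
    {Q : Finset V} (hQ : G.IsClique (↑Q : Set V)) :
    ∑ v ∈ Q, w v ≤ ∑ S ∈ (stableSetsOf G).filter (fun S => (S ∩ Q).Nonempty), y' S := by
  have step1 : ∑ v ∈ Q, w v ≤ ∑ v ∈ Q, ∑ S ∈ (stableSetsOf G).filter (fun S => v ∈ S), y' S :=
    Finset.sum_le_sum fun v _ => hfeas v
  have step2 : ∑ v ∈ Q, ∑ S ∈ (stableSetsOf G).filter (fun S => v ∈ S), y' S
      = ∑ S ∈ stableSetsOf G, ((Q ∩ S).card : ℝ) * y' S := by
    have : ∀ v ∈ Q, ∑ S ∈ (stableSetsOf G).filter (fun S => v ∈ S), y' S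
        = ∑ S ∈ stableSetsOf G, if v ∈ S then y' S else 0 := by
      intro v _; rw [Finset.sum_filter]
    rw [Finset.sum_congr rfl this, Finset.sum_comm]
    refine Finset.sum_congr rfl fun S _ => ?_
    rw [Finset.sum_ite_mem, Finset.sum_const, nsmul_eq_mul]
  have step3 : ∑ S ∈ stableSetsOf G, ((Q ∩ S).card : ℝ) * y' S
      = ∑ S ∈ stableSetsOf G, if (S ∩ Q).Nonempty then y' S else 0 := by
    refine Finset.sum_congr rfl fun S hS => ?_
    by_cases h : (S ∩ Q).Nonempty
    · rw [if_pos h]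
      have hle : (S ∩ Q).card ≤ 1 :=
        stable_clique_inter (mem_stableSetsOf.mp hS).2 hQ
      have hge : 1 ≤ (S ∩ Q).card := Finset.card_pos.mpr h
      have : (Q ∩ S).card = 1 := by rw [Finset.inter_comm]; omega
      rw [this]; norm_num
    · rw [if_neg h]
      have : Q ∩ S = ∅ := by
        rw [Finset.inter_comm]
        exact Finset.not_nonempty_iff_eq_empty.mp h
      rw [this]; simp
  rw [Finset.sum_filter]
  exact step1.trans (le_of_eq (step2.trans step3))


/-- Condition (2) of the core follows from dual feasibility. -/
lemma cond2_of_feasible (y' : Finset V → ℝ) (hy' : ∀ S ∈ stableSetsOf G, 0 ≤ y' S)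
    (hfeas : ∀ v : V, w v ≤ ∑ S ∈ (stableSetsOf G).filter (fun S => v ∈ S), y' S)
    (T : Set V) :
    cliqueWorth G w T ≤
      ∑ S ∈ (stableSetsOf G).filter (fun S : Finset V => ((S : Set V) ∩ T).Nonempty), y' S := by
  obtain ⟨Q, hQT, hQ, hval⟩ := exists_cliqueWorth G w T
  rw [hval]
  refine (clique_le_filter_sum y' hy' hfeas hQ).trans ?_
  apply Finset.sum_le_sum_of_subset_of_nonneg
  · intro S hS
    rw [Finset.mem_filter] at hS ⊢
    refine ⟨hS.1, ?_⟩
    obtain ⟨a, ha⟩ := hS.2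
    rw [Finset.mem_inter] at ha
    exact ⟨a, Set.mem_inter (Finset.mem_coe.mpr ha.1) (hQT (Finset.mem_coe.mpr ha.2))⟩
  · intro S hS _
    exact hy' S (Finset.mem_filter.mp hS).1

lemma weak_duality (y' : Finset V → ℝ) (hy' : ∀ S ∈ stableSetsOf G, 0 ≤ y' S)
    (hfeas : ∀ v : V, w v ≤ ∑ S ∈ (stableSetsOf G).filter (fun S => v ∈ S), y' S) :
    cliqueWorth G w Set.univ ≤ ∑ S ∈ stableSetsOf G, y' S := by
  refine (cond2_of_feasible y' hy' hfeas Set.univ).trans ?_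
  apply Finset.sum_le_sum_of_subset_of_nonneg (Finset.filter_subset _ _)
  intro S hS _
  exact hy' S hS

lemma cliqueNum_le_of_embedding {α β : Type*} [Fintype α] [Fintype β]
    {A : SimpleGraph α} {B : SimpleGraph β} (f : A ↪g B) : A.cliqueNum ≤ B.cliqueNum := by
  obtain ⟨s, hs⟩ := A.exists_isNClique_cliqueNum
  have hc : B.IsClique ↑(s.map f.toEmbedding) := by
    rw [Finset.coe_map]
    rintro x ⟨a, ha, rfl⟩ y ⟨b, hb, rfl⟩ hxy
    have hab : a ≠ b := fun h => hxy (by rw [h])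
    exact f.map_adj_iff.mpr (hs.1 ha hb hab)
  have := IsClique.card_le_cliqueNum (tc := hc)
  rwa [Finset.card_map, hs.2] at this

lemma cliqueNum_eq_of_iso {α β : Type*} [Fintype α] [Fintype β]
    {A : SimpleGraph α} {B : SimpleGraph β} (e : A ≃g B) : A.cliqueNum = B.cliqueNum :=
  le_antisymm (cliqueNum_le_of_embedding e.toEmbedding)
    (cliqueNum_le_of_embedding e.symm.toEmbedding)

lemma chromaticNumber_eq_of_iso {α β : Type*} {A : SimpleGraph α} {B : SimpleGraph β}
    (e : A ≃g B) : A.chromaticNumber = B.chromaticNumber :=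
  le_antisymm (SimpleGraph.chromaticNumber_mono_of_hom e.toHom)
    (SimpleGraph.chromaticNumber_mono_of_hom e.symm.toHom)

variable {W : Type*} [Fintype W]

lemma ground_clique_card_le {H : SimpleGraph W} {T Q : Finset W} (hQT : Q ⊆ T)
    (hQ : H.IsClique (↑Q : Set W)) : Q.card ≤ (H.induce (↑T : Set W)).cliqueNum := by
  have hmem : ∀ a : {x // x ∈ Q}, (↑a : W) ∈ (↑T : Set W) := fun a => Finset.mem_coe.mpr (hQT a.2)
  have hc : (H.induce (↑T : Set W)).IsClique
      ↑(Q.attach.map ⟨fun a : {x // x ∈ Q} => (⟨↑a, hmem a⟩ : ↥(↑T : Set W)),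
        fun a b h => by
          apply Subtype.ext
          exact congrArg (Subtype.val : ↥(↑T : Set W) → W) h⟩) := by
    rw [Finset.coe_map]
    rintro x ⟨a, _, rfl⟩ y ⟨b, _, rfl⟩ hxy
    have hab : (↑a : W) ≠ ↑b := by
      intro h
      exact hxy (Subtype.ext h)
    exact hQ (Finset.mem_coe.mpr a.2) (Finset.mem_coe.mpr b.2) hab
  have := IsClique.card_le_cliqueNum (tc := hc)
  rwa [Finset.card_map, Finset.card_attach] at this

lemma exists_ground_clique (H : SimpleGraph W) (T : Finset W) :
    ∃ Q : Finset W, Q ⊆ T ∧ H.IsClique (↑Q : Set W) ∧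
      Q.card = (H.induce (↑T : Set W)).cliqueNum := by
  obtain ⟨s, hs⟩ := (H.induce (↑T : Set W)).exists_isNClique_cliqueNum
  refine ⟨s.map ⟨Subtype.val, Subtype.val_injective⟩, ?_, ?_, ?_⟩
  · intro a ha
    obtain ⟨b, -, rfl⟩ := Finset.mem_map.mp ha
    exact Finset.mem_coe.mp b.2
  · rw [Finset.coe_map]
    rintro x ⟨a, ha, rfl⟩ y ⟨b, hb, rfl⟩ hxy
    have hab : a ≠ b := fun h => hxy (by rw [h])
    exact hs.1 ha hb hab
  · rw [Finset.card_map, hs.2]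

variable {V : Type*} [Fintype V] {G : SimpleGraph V} {w : V → ℝ} {T : Set V}

/-- The replication graph: `k` pairwise-adjacent copies of every vertex. -/
def Repl (G : SimpleGraph V) (k : ℕ) : SimpleGraph (V × Fin k) where
  Adj a b := G.Adj a.1 b.1 ∨ (a.1 = b.1 ∧ a ≠ b)
  symm := by
    constructor
    rintro a b (h | ⟨h1, h2⟩)
    · exact Or.inl h.symm
    · exact Or.inr ⟨h1.symm, h2.symm⟩
  loopless := by
    constructor
    rintro a (h | ⟨h1, h2⟩)
    · exact G.loopless.irrefl _ h
    · exact h2 rfl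

theorem repl_perfect (G : SimpleGraph V) (hG : IsPerfect G) (k : ℕ) (T : Finset (V × Fin k)) :
    ((Repl G k).induce (↑T : Set (V × Fin k))).chromaticNumber
      = (((Repl G k).induce (↑T : Set (V × Fin k))).cliqueNum : ℕ∞) := by
  induction T using Finset.strongInduction with
  | _ T ih =>
  by_cases hA : ∀ a ∈ T, ∀ b ∈ T, (a : V × Fin k).1 = b.1 → a = b
  · -- Case A: at most one copy of each vertex: isomorphic to an induced subgraph of `G`
    have hbij : Function.Bijective (fun a : ↥(↑T : Set (V × Fin k)) =>
        (⟨(↑a : V × Fin k).1, Finset.mem_coe.mpr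
          (Finset.mem_image_of_mem Prod.fst (Finset.mem_coe.mp a.2))⟩ :
          ↥(↑(T.image Prod.fst) : Set V))) := by
      constructor
      · rintro ⟨a, ha⟩ ⟨b, hb⟩ hab
        have h1 : a.1 = b.1 := congrArg (Subtype.val : ↥(↑(T.image Prod.fst) : Set V) → V) hab
        exact Subtype.ext (hA a (Finset.mem_coe.mp ha) b (Finset.mem_coe.mp hb) h1)
      · rintro ⟨v, hv⟩
        obtain ⟨a, ha, rfl⟩ := Finset.mem_image.mp (Finset.mem_coe.mp hv)
        exact ⟨⟨a, Finset.mem_coe.mpr ha⟩, rfl⟩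
    have he : ∀ a b : ↥(↑T : Set (V × Fin k)),
        (G.induce (↑(T.image Prod.fst) : Set V)).Adj (Equiv.ofBijective _ hbij a)
          (Equiv.ofBijective _ hbij b) ↔ ((Repl G k).induce (↑T : Set (V × Fin k))).Adj a b := by
      rintro ⟨a, ha⟩ ⟨b, hb⟩
      show G.Adj a.1 b.1 ↔ (G.Adj a.1 b.1 ∨ (a.1 = b.1 ∧ a ≠ b))
      constructor
      · exact Or.inl
      · rintro (h | ⟨h1, h2⟩)
        · exact h
        · exact absurd (hA a (Finset.mem_coe.mp ha) b (Finset.mem_coe.mp hb) h1) h2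
    have e : (Repl G k).induce (↑T : Set (V × Fin k)) ≃g
        G.induce (↑(T.image Prod.fst) : Set V) :=
      { Equiv.ofBijective _ hbij with map_rel_iff' := fun {a b} => he a b }
    rw [chromaticNumber_eq_of_iso e, cliqueNum_eq_of_iso e]
    exact hG _
  · -- Case B: some vertex has two copies in `T`
    push_neg at hA
    obtain ⟨x0, hx0T, x1, hx1T, hfst, hne⟩ := hA
    set H := Repl G k with hH
    have hadj_iff : ∀ a b : V × Fin k, H.Adj a b ↔ (G.Adj a.1 b.1 ∨ (a.1 = b.1 ∧ a ≠ b)) :=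
      fun a b => Iff.rfl
    have hx1adj : ∀ c : V × Fin k, c ≠ x1 → (c = x0 ∨ H.Adj c x0) → H.Adj c x1 := by
      rintro c hcx1 (rfl | hadj)
      · exact Or.inr ⟨hfst, hcx1⟩
      · rcases hadj with h | ⟨h1, h2⟩
        · exact Or.inl (hfst ▸ h)
        · exact Or.inr ⟨h1.trans hfst, hcx1⟩
    set T' := T.erase x1 with hT'
    have hx0T' : x0 ∈ T' := Finset.mem_erase.mpr ⟨hne, hx0T⟩
    have hssub : T' ⊂ T := Finset.erase_ssubset hx1T
    have hIH := ih T' hssub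
    set n := (H.induce (↑T' : Set (V × Fin k))).cliqueNum with hn
    have hcolable : (H.induce (↑T' : Set (V × Fin k))).Colorable n :=
      SimpleGraph.chromaticNumber_le_iff_colorable.mp (le_of_eq hIH)
    obtain ⟨C'⟩ := hcolable
    have hn1 : 1 ≤ n := by
      have h0 := ground_clique_card_le (H := H) (T := T') (Q := {x0})
        (Finset.singleton_subset_iff.mpr hx0T') (by simp)
      simpa using h0
    have hnle : n ≤ (H.induce (↑T : Set (V × Fin k))).cliqueNum := by
      obtain ⟨Q, hQT', hQc, hQcard⟩ := exists_ground_clique H T'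
      rw [hn, ← hQcard]
      exact ground_clique_card_le (hQT'.trans (Finset.erase_subset _ _)) hQc
    have hchrom_ge : (((H.induce (↑T : Set (V × Fin k))).cliqueNum : ℕ∞)) ≤
        (H.induce (↑T : Set (V × Fin k))).chromaticNumber := by
      obtain ⟨s, hs⟩ := (H.induce (↑T : Set (V × Fin k))).exists_isNClique_cliqueNum
      have h0 := hs.1.card_le_chromaticNumber
      rwa [hs.2] at h0
    by_cases hcase : (H.induce (↑T : Set (V × Fin k))).cliqueNum ≤ n
    · -- B2 : clique number did not grow
      have hwT : (H.induce (↑T : Set (V × Fin k))).cliqueNum = n := le_antisymm hcase hnle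
      set x0s : ↥(↑T' : Set (V × Fin k)) := ⟨x0, Finset.mem_coe.mpr hx0T'⟩ with hx0s
      set B : Finset (V × Fin k) :=
        (T'.filter fun c => ∃ hc : c ∈ T', C' ⟨c, Finset.mem_coe.mpr hc⟩ = C' x0s).erase x0 with hB
      have hBsub : B ⊆ T' := (Finset.erase_subset _ _).trans (Finset.filter_subset _ _)
      have hBspec : ∀ c ∈ B, c ∈ T' ∧ c ≠ x0 ∧
          ∀ (hc : c ∈ T'), C' ⟨c, Finset.mem_coe.mpr hc⟩ = C' x0s := by
        intro c hc
        rw [hB, Finset.mem_erase, Finset.mem_filter] at hc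
        obtain ⟨h1, h2, h3, h4⟩ := hc
        exact ⟨h2, h1, fun _ => h4⟩
      have hclaim : ∀ Q : Finset (V × Fin k), Q ⊆ T' → H.IsClique (↑Q : Set (V × Fin k)) →
          Q.card = n → ∃ c ∈ Q, c ∈ B := by
        intro Q hQT' hQc hQcard
        have hx1Q : x1 ∉ Q := fun h => (Finset.mem_erase.mp (hQT' h)).1 rfl
        have hx0Q : x0 ∉ Q := by
          intro hx0Q
          have hclique : H.IsClique (↑(insert x1 Q) : Set (V × Fin k)) := by
            rw [Finset.coe_insert]
            refine hQc.insert fun c hcQ hne' => ?_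
            have hcc : c = x0 ∨ H.Adj c x0 := by
              by_cases h : c = x0
              · exact Or.inl h
              · exact Or.inr (hQc hcQ (Finset.mem_coe.mpr hx0Q) h)
            exact ((hx1adj c (fun h => hx1Q (h ▸ (Finset.mem_coe.mp hcQ))) hcc)).symm
          have hsub : insert x1 Q ⊆ T :=
            Finset.insert_subset hx1T (hQT'.trans (Finset.erase_subset _ _))
          have hle := ground_clique_card_le hsub hclique
          rw [Finset.card_insert_of_notMem hx1Q, hQcard, hwT] at hle
          omega
        have hQmem : ∀ a : {x // x ∈ Q}, (↑a : V × Fin k) ∈ (↑T' : Set (V × Fin k)) :=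
          fun a => Finset.mem_coe.mpr (hQT' a.2)
        set g : {x // x ∈ Q} → Fin n := fun a => C' ⟨↑a, hQmem a⟩ with hg
        have hginj : Set.InjOn g ↑Q.attach := by
          intro a _ b _ hgab
          by_contra hne'
          have hvne : (↑a : V × Fin k) ≠ ↑b := fun h => hne' (Subtype.ext h)
          have hadj : H.Adj ↑a ↑b := hQc (Finset.mem_coe.mpr a.2) (Finset.mem_coe.mpr b.2) hvne
          exact (C'.valid (v := ⟨↑a, hQmem a⟩) (w := ⟨↑b, hQmem b⟩) hadj) hgab
        have hcard : (Q.attach.image g).card = n := by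
          rw [Finset.card_image_of_injOn hginj, Finset.card_attach, hQcard]
        have huniv : Q.attach.image g = Finset.univ :=
          Finset.eq_univ_of_card _ (by rw [hcard, Fintype.card_fin])
        have hmem0 : C' x0s ∈ Q.attach.image g := huniv ▸ Finset.mem_univ _
        obtain ⟨a, -, ha⟩ := Finset.mem_image.mp hmem0
        refine ⟨↑a, a.2, ?_⟩
        have hax0 : (↑a : V × Fin k) ≠ x0 := by
          intro h
          apply hx0Q
          rw [← h]
          exact a.2
        rw [hB, Finset.mem_erase]
        exact ⟨hax0, Finset.mem_filter.mpr ⟨hQT' a.2, hQT' a.2, ha⟩⟩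
      set T'' := T' \ B with hT''
      have hT''sub : T'' ⊆ T' := Finset.sdiff_subset
      have hT''T : T'' ⊂ T := by
        rw [Finset.ssubset_iff_of_subset (hT''sub.trans (Finset.erase_subset _ _))]
        exact ⟨x1, hx1T, fun h => (Finset.mem_erase.mp (hT''sub h)).1 rfl⟩
      have hIH'' := ih T'' hT''T
      have hw'' : ((H.induce (↑T'' : Set (V × Fin k))).cliqueNum) < n := by
        by_contra hge
        push_neg at hge
        obtain ⟨Q, hQsub, hQc, hQcard⟩ := exists_ground_clique H T''
        obtain ⟨Q', hQ'sub, hQ'card⟩ := Finset.exists_subset_card_eq (s := Q) (n := n) (by omega)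
        obtain ⟨c, hcQ', hcB⟩ := hclaim Q' (hQ'sub.trans (hQsub.trans hT''sub))
          (hQc.subset (Finset.coe_subset.mpr hQ'sub)) hQ'card
        have hc'' : c ∈ T'' := hQsub (hQ'sub hcQ')
        rw [hT'', Finset.mem_sdiff] at hc''
        exact hc''.2 hcB
      obtain ⟨p, hp⟩ := Nat.exists_eq_succ_of_ne_zero (by omega : n ≠ 0)
      have hcol'' : (H.induce (↑T'' : Set (V × Fin k))).Colorable p := by
        rw [← SimpleGraph.chromaticNumber_le_iff_colorable, hIH'', Nat.cast_le]
        omega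
      obtain ⟨C''⟩ := hcol''
      have hBnadjx0 : ∀ c ∈ B, ¬ H.Adj c x0 := by
        intro c hc hadj
        obtain ⟨hcT', hcne, hcol⟩ := hBspec c hc
        exact C'.valid (v := ⟨c, Finset.mem_coe.mpr hcT'⟩) (w := x0s) hadj (hcol hcT')
      have hBnadjx1 : ∀ c ∈ B, ¬ H.Adj c x1 := by
        intro c hc hadj
        obtain ⟨hcT', hcne, -⟩ := hBspec c hc
        rcases hadj with h | ⟨h1, h2⟩
        · exact hBnadjx0 c hc (Or.inl (hfst ▸ h))
        · exact hBnadjx0 c hc (Or.inr ⟨h1.trans hfst.symm, hcne⟩)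
      have hBB : ∀ c ∈ B, ∀ d ∈ B, ¬ H.Adj c d := by
        intro c hc d hd hadj
        obtain ⟨hcT', -, hcolc⟩ := hBspec c hc
        obtain ⟨hdT', -, hcold⟩ := hBspec d hd
        exact C'.valid (v := ⟨c, Finset.mem_coe.mpr hcT'⟩) (w := ⟨d, Finset.mem_coe.mpr hdT'⟩)
          hadj ((hcolc hcT').trans (hcold hdT').symm)
      have hmem'' : ∀ a : ↥(↑T : Set (V × Fin k)),
          ¬ ((↑a : V × Fin k) ∈ B ∨ (↑a : V × Fin k) = x1) →
          (↑a : V × Fin k) ∈ (↑T'' : Set (V × Fin k)) := by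
        intro a h
        push_neg at h
        rw [hT'']
        rw [Finset.mem_coe, Finset.mem_sdiff]
        exact ⟨Finset.mem_erase.mpr ⟨h.2, Finset.mem_coe.mp a.2⟩, h.1⟩
      have hcolT : (H.induce (↑T : Set (V × Fin k))).Colorable (p + 1) := by
        refine ⟨SimpleGraph.Coloring.mk (fun a =>
          if h : ((↑a : V × Fin k) ∈ B ∨ (↑a : V × Fin k) = x1) then Fin.last p
          else (C'' ⟨↑a, hmem'' a h⟩).castSucc) ?_⟩
        intro a b hab
        have hvadj : H.Adj ↑a ↑b := hab
        have hvne : (↑a : V × Fin k) ≠ ↑b := hvadj.ne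
        split_ifs with h1 h2 h2
        · exfalso
          rcases h1 with h1 | h1 <;> rcases h2 with h2 | h2
          · exact hBB _ h1 _ h2 hvadj
          · exact hBnadjx1 _ h1 (h2 ▸ hvadj)
          · exact hBnadjx1 _ h2 (h1 ▸ hvadj.symm)
          · exact hvne (h1.trans h2.symm)
        · exact (Fin.castSucc_lt_last _).ne'
        · exact (Fin.castSucc_lt_last _).ne
        · intro hcc
          exact C''.valid (v := ⟨↑a, hmem'' a h1⟩) (w := ⟨↑b, hmem'' b h2⟩) hvadj
            (Fin.castSucc_injective _ hcc)
      have hchle : (H.induce (↑T : Set (V × Fin k))).chromaticNumber ≤ ((p + 1 : ℕ) : ℕ∞) :=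
        hcolT.chromaticNumber_le
      rw [hwT]
      refine le_antisymm ?_ (by rw [← hwT]; exact hchrom_ge)
      rw [hp]
      exact hchle
    · -- B1 : clique number grew; extend an optimal coloring of `T'` by one color
      have hcolT : (H.induce (↑T : Set (V × Fin k))).Colorable (n + 1) := by
        refine ⟨SimpleGraph.Coloring.mk (fun a =>
          if h : (↑a : V × Fin k) = x1 then Fin.last n
          else (C' ⟨↑a, Finset.mem_coe.mpr
            (Finset.mem_erase.mpr ⟨h, Finset.mem_coe.mp a.2⟩)⟩).castSucc) ?_⟩
        intro a b hab
        have hvadj : H.Adj ↑a ↑b := hab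
        have hvne : (↑a : V × Fin k) ≠ ↑b := hvadj.ne
        split_ifs with h1 h2 h2
        · exact absurd (h1.trans h2.symm) hvne
        · exact (Fin.castSucc_lt_last _).ne'
        · exact (Fin.castSucc_lt_last _).ne
        · intro hcc
          refine C'.valid (v := ⟨↑a, Finset.mem_coe.mpr (Finset.mem_erase.mpr ⟨h1, Finset.mem_coe.mp a.2⟩)⟩)
            (w := ⟨↑b, Finset.mem_coe.mpr (Finset.mem_erase.mpr ⟨h2, Finset.mem_coe.mp b.2⟩)⟩) hvadj
            (Fin.castSucc_injective _ hcc)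
      have hchle : (H.induce (↑T : Set (V × Fin k))).chromaticNumber ≤ ((n + 1 : ℕ) : ℕ∞) :=
        hcolT.chromaticNumber_le
      have h2 : (n + 1 : ℕ) ≤ (H.induce (↑T : Set (V × Fin k))).cliqueNum := by omega
      exact le_antisymm (hchle.trans (Nat.cast_le.mpr h2)) hchrom_ge

theorem exists_int_cover (G : SimpleGraph V) (hG : IsPerfect G) (m : V → ℕ) :
    ∃ (k : ℕ) (f : Fin k → Finset V),
      (∀ b, IsStableSet G (↑(f b) : Set V)) ∧
      (∀ v, m v ≤ (Finset.univ.filter fun b => v ∈ f b).card) ∧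
      ((k : ℝ) ≤ cliqueWorth G (fun v => (m v : ℝ)) Set.univ) := by
  set K := (Finset.univ.sup m) + 1 with hK
  have hmK : ∀ v, m v ≤ K := fun v =>
    le_trans (Finset.le_sup (f := m) (Finset.mem_univ v)) (Nat.le_succ _)
  set H := Repl G K with hH
  set Tm : Finset (V × Fin K) := Finset.univ.filter (fun a => (a.2 : ℕ) < m a.1) with hTm
  set n := (H.induce (↑Tm : Set (V × Fin K))).cliqueNum with hn
  have hcolable : (H.induce (↑Tm : Set (V × Fin K))).Colorable n :=
    SimpleGraph.chromaticNumber_le_iff_colorable.mp (le_of_eq (repl_perfect G hG K Tm))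
  obtain ⟨C⟩ := hcolable
  set f : Fin n → Finset V := fun b => Finset.univ.filter
    (fun v => ∃ (i : Fin K) (h : (v, i) ∈ Tm), C ⟨(v, i), Finset.mem_coe.mpr h⟩ = b) with hf
  have hfmem : ∀ b v, v ∈ f b ↔
      ∃ (i : Fin K) (h : (v, i) ∈ Tm), C ⟨(v, i), Finset.mem_coe.mpr h⟩ = b := by
    intro b v
    rw [hf]
    simp only [Finset.mem_filter, Finset.mem_univ, true_and]
  refine ⟨n, f, ?_, ?_, ?_⟩
  · -- stability
    intro b u hu v hv huv hadj
    obtain ⟨i, hi, hci⟩ := (hfmem b u).mp (Finset.mem_coe.mp hu)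
    obtain ⟨j, hj, hcj⟩ := (hfmem b v).mp (Finset.mem_coe.mp hv)
    have hAdj : H.Adj (u, i) (v, j) := Or.inl hadj
    exact C.valid (v := ⟨(u, i), Finset.mem_coe.mpr hi⟩) (w := ⟨(v, j), Finset.mem_coe.mpr hj⟩)
      hAdj (hci.trans hcj.symm)
  · -- coverage
    intro v
    have hdom : (Finset.univ.filter fun i : Fin K => (i : ℕ) < m v).card = m v := by
      have he : (Finset.univ.filter fun i : Fin K => (i : ℕ) < m v) =
          (Finset.range (m v)).attachFin
            (fun a ha => lt_of_lt_of_le (Finset.mem_range.mp ha) (hmK v)) := by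
        ext i
        simp [Finset.mem_attachFin]
      rw [he, Finset.card_attachFin, Finset.card_range]
    rcases Nat.eq_zero_or_pos (m v) with hmv | hmv
    · omega
    have hi0 : ((⟨0, by omega⟩ : Fin K) : ℕ) < m v := hmv
    have hn1 : 1 ≤ n := by
      have h0 : ((v, (⟨0, by omega⟩ : Fin K))) ∈ Tm := by
        rw [hTm, Finset.mem_filter]
        exact ⟨Finset.mem_univ _, hi0⟩
      have := ground_clique_card_le (H := H) (T := Tm) (Q := {(v, (⟨0, by omega⟩ : Fin K))})
        (Finset.singleton_subset_iff.mpr h0) (by simp)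
      rw [← hn] at this
      simpa using this
    rw [← hdom]
    have hTmem : ∀ i : Fin K, (i : ℕ) < m v → (v, i) ∈ Tm := by
      intro i hi
      rw [hTm, Finset.mem_filter]
      exact ⟨Finset.mem_univ _, hi⟩
    apply Finset.card_le_card_of_injOn
      (fun i => if h : (v, i) ∈ Tm then C ⟨(v, i), Finset.mem_coe.mpr h⟩ else ⟨0, by omega⟩)
    · intro i hi
      simp only [Finset.mem_coe] at hi ⊢
      rw [Finset.mem_filter] at hi
      rw [dif_pos (hTmem i hi.2)]
      rw [Finset.mem_filter]
      refine ⟨Finset.mem_univ _, ?_⟩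
      rw [hfmem]
      exact ⟨i, hTmem i hi.2, rfl⟩
    · intro i hi j hj hij
      rw [Finset.mem_coe, Finset.mem_filter] at hi hj
      simp only [dif_pos (hTmem i hi.2), dif_pos (hTmem j hj.2)] at hij
      by_contra hne
      have hAdj : H.Adj (v, i) (v, j) := Or.inr ⟨rfl, by simp [Prod.ext_iff, hne]⟩
      exact C.valid (v := ⟨(v, i), Finset.mem_coe.mpr (hTmem i hi.2)⟩)
        (w := ⟨(v, j), Finset.mem_coe.mpr (hTmem j hj.2)⟩) hAdj hij
  · -- bound by the clique number / worth
    obtain ⟨Q, hQTm, hQc, hQcard⟩ := exists_ground_clique H Tm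
    set P : Finset V := Q.image Prod.fst with hP
    have hPclique : G.IsClique (↑P : Set V) := by
      rw [hP, Finset.coe_image]
      rintro x ⟨a, ha, rfl⟩ y ⟨b, hb, rfl⟩ hxy
      have hab : a ≠ b := fun h => hxy (by rw [h])
      rcases hQc ha hb hab with h | ⟨h1, h2⟩
      · exact h
      · exact absurd h1 hxy
    have hcount : Q.card ≤ ∑ v ∈ P, m v := by
      rw [Finset.card_eq_sum_card_fiberwise (f := Prod.fst) (t := P)
        (fun x hx => Finset.mem_image_of_mem _ hx)]
      refine Finset.sum_le_sum fun v hv => ?_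
      calc (Q.filter fun a => a.1 = v).card
          ≤ ((Finset.univ.filter fun i : Fin K => (i : ℕ) < m v).card) := by
            apply Finset.card_le_card_of_injOn (fun a => a.2)
            · intro a ha
              simp only [Finset.mem_coe] at ha ⊢
              rw [Finset.mem_filter] at ha ⊢
              have := hQTm ha.1
              rw [hTm, Finset.mem_filter] at this
              refine ⟨Finset.mem_univ _, ?_⟩
              rw [← ha.2]
              exact this.2
            · intro a ha b hb hab
              rw [Finset.mem_coe, Finset.mem_filter] at ha hb
              exact Prod.ext (ha.2.trans hb.2.symm) hab
        _ = m v := by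
            have he : (Finset.univ.filter fun i : Fin K => (i : ℕ) < m v) =
                (Finset.range (m v)).attachFin
                  (fun a ha => lt_of_lt_of_le (Finset.mem_range.mp ha) (hmK v)) := by
              ext i
              simp [Finset.mem_attachFin]
            rw [he, Finset.card_attachFin, Finset.card_range]
    have hworth : ∑ v ∈ P, ((m v : ℝ)) ≤ cliqueWorth G (fun v => (m v : ℝ)) Set.univ :=
      le_cliqueWorth (by simp) hPclique
    calc (n : ℝ) = (Q.card : ℝ) := by rw [hQcard, hn]
      _ ≤ ((∑ v ∈ P, m v : ℕ) : ℝ) := by exact_mod_cast hcount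
      _ = ∑ v ∈ P, ((m v : ℝ)) := by push_cast; ring
      _ ≤ _ := hworth

/-- approx feasible -/
lemma exists_approx_feasible (G : SimpleGraph V) (hG : IsPerfect G) (w : V → ℝ)
    (hw : ∀ v, 0 ≤ w v) {ε : ℝ} (hε : 0 < ε) :
    ∃ y' : Finset V → ℝ, (∀ S ∈ stableSetsOf G, 0 ≤ y' S) ∧
      (∀ v : V, w v ≤ ∑ S ∈ (stableSetsOf G).filter (fun S => v ∈ S), y' S) ∧
      ∑ S ∈ stableSetsOf G, y' S ≤ cliqueWorth G w Set.univ + ε := by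
  obtain ⟨N, hN⟩ := exists_nat_gt ((Fintype.card V : ℝ) / ε)
  have hN0 : 0 < (N : ℝ) := lt_of_le_of_lt (div_nonneg (by positivity) hε.le) hN
  set m : V → ℕ := fun v => ⌈w v * N⌉₊ with hm
  obtain ⟨k, f, hstable, hcover, hbound⟩ := exists_int_cover G hG m
  set y' : Finset V → ℝ := fun S =>
    ((Finset.univ.filter fun b : Fin k => f b = S ∧ S.Nonempty).card : ℝ) / N with hy'
  have hy'nonneg : ∀ S ∈ stableSetsOf G, 0 ≤ y' S := fun S _ => by positivity
  refine ⟨y', hy'nonneg, ?_, ?_⟩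
  · -- feasibility
    intro v
    have hcard : (Finset.univ.filter fun b : Fin k => v ∈ f b).card ≤
        ∑ S ∈ (stableSetsOf G).filter (fun S => v ∈ S),
          (Finset.univ.filter fun b : Fin k => f b = S ∧ S.Nonempty).card := by
      rw [Finset.card_eq_sum_card_fiberwise (f := f)
        (t := (stableSetsOf G).filter (fun S => v ∈ S)) (fun b hb => by
          rw [Finset.mem_coe, Finset.mem_filter] at hb
          rw [Finset.mem_coe, Finset.mem_filter]
          exact ⟨mem_stableSetsOf.mpr ⟨⟨v, hb.2⟩, hstable b⟩, hb.2⟩)]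
      refine Finset.sum_le_sum fun S hS => Finset.card_le_card fun b hb => ?_
      rw [Finset.mem_filter] at hb ⊢
      obtain ⟨hb1, hb2⟩ := hb
      rw [Finset.mem_filter] at hb1
      exact ⟨Finset.mem_univ _, hb2, hb2 ▸ ⟨v, hb1.2⟩⟩
    have hwv : w v ≤ (m v : ℝ) / N := by
      rw [le_div_iff₀ hN0]
      exact Nat.le_ceil _
    have hsum : ∑ S ∈ (stableSetsOf G).filter (fun S => v ∈ S), y' S
        = ((∑ S ∈ (stableSetsOf G).filter (fun S => v ∈ S),
            (Finset.univ.filter fun b : Fin k => f b = S ∧ S.Nonempty).card : ℕ) : ℝ) / N := by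
      rw [hy']
      push_cast
      rw [Finset.sum_div]
    rw [hsum]
    refine hwv.trans ?_
    gcongr
    exact_mod_cast le_trans (hcover v) hcard
  · -- total value
    have hsum : ∑ S ∈ stableSetsOf G, y' S
        = ((∑ S ∈ stableSetsOf G,
            (Finset.univ.filter fun b : Fin k => f b = S ∧ S.Nonempty).card : ℕ) : ℝ) / N := by
      rw [hy']
      push_cast
      rw [Finset.sum_div]
    have hk : (∑ S ∈ stableSetsOf G,
        (Finset.univ.filter fun b : Fin k => f b = S ∧ S.Nonempty).card) ≤ k := by
      have hfib := Finset.card_eq_sum_card_fiberwise (f := f)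
        (s := Finset.univ.filter fun b : Fin k => (f b).Nonempty) (t := stableSetsOf G)
        (fun b hb => by
          rw [Finset.mem_coe, Finset.mem_filter] at hb
          exact Finset.mem_coe.mpr (mem_stableSetsOf.mpr ⟨hb.2, hstable b⟩))
      have heq : ∀ S ∈ stableSetsOf G,
          (Finset.univ.filter fun b : Fin k => f b = S ∧ S.Nonempty).card
          = ((Finset.univ.filter fun b : Fin k => (f b).Nonempty).filter
              fun b => f b = S).card := by
        intro S hS
        congr 1
        rw [Finset.filter_filter]
        apply Finset.filter_congr
        intro b _
        constructor
        · rintro ⟨h1, h2⟩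
          exact ⟨h1 ▸ h2, h1⟩
        · rintro ⟨h1, h2⟩
          exact ⟨h2, h2 ▸ h1⟩
      calc (∑ S ∈ stableSetsOf G,
            (Finset.univ.filter fun b : Fin k => f b = S ∧ S.Nonempty).card)
          = ∑ S ∈ stableSetsOf G, ((Finset.univ.filter fun b : Fin k =>
              (f b).Nonempty).filter fun b => f b = S).card := Finset.sum_congr rfl heq
        _ = (Finset.univ.filter fun b : Fin k => (f b).Nonempty).card := hfib.symm
        _ ≤ (Finset.univ : Finset (Fin k)).card := Finset.card_le_card (Finset.filter_subset _ _)
        _ = k := by simp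
    obtain ⟨Q, hQu, hQc, hQval⟩ := exists_cliqueWorth G (fun v => (m v : ℝ)) Set.univ
    have hsw : ∑ v ∈ Q, w v ≤ cliqueWorth G w Set.univ :=
      le_cliqueWorth (by simp) hQc
    have hQcard : (Q.card : ℝ) ≤ Fintype.card V := by
      exact_mod_cast Finset.card_le_univ Q
    have hQw : cliqueWorth G (fun v => (m v : ℝ)) Set.univ
        ≤ cliqueWorth G w Set.univ * N + Fintype.card V := by
      rw [hQval]
      have h1 : ∀ v ∈ Q, ((m v : ℝ)) ≤ w v * N + 1 := by
        intro v _
        rw [hm]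
        exact (Nat.ceil_lt_add_one (mul_nonneg (hw v) hN0.le)).le
      calc ∑ v ∈ Q, ((m v : ℝ)) ≤ ∑ v ∈ Q, (w v * N + 1) := Finset.sum_le_sum h1
        _ = (∑ v ∈ Q, w v) * N + Q.card := by
            rw [Finset.sum_add_distrib, Finset.sum_const, nsmul_eq_mul, mul_one,
              Finset.sum_mul]
        _ ≤ cliqueWorth G w Set.univ * N + Fintype.card V := by
            have := mul_le_mul_of_nonneg_right hsw hN0.le
            linarith
    have hcv : (Fintype.card V : ℝ) ≤ N * ε := by
      have := (div_lt_iff₀ hε).mp hN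
      linarith
    rw [hsum, div_le_iff₀ hN0]
    have hkR : ((∑ S ∈ stableSetsOf G,
        (Finset.univ.filter fun b : Fin k => f b = S ∧ S.Nonempty).card : ℕ) : ℝ) ≤ k := by
      exact_mod_cast hk
    have hkk := hbound.trans hQw
    nlinarith [hkk, hkR, hcv]

end CGP

open CGP in
theorem clique_game_core_iff_dual_optimal
    {V : Type*} [Fintype V] (G : SimpleGraph V) (hG : IsPerfect G)
    (w : V → ℝ) (hw : ∀ v, 0 ≤ w v)
    (y : Finset V → ℝ) (hy : ∀ S ∈ stableSetsOf G, 0 ≤ y S) :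
    -- `y` is in the core of the clique game
    ((∑ S ∈ stableSetsOf G, y S = cliqueWorth G w Set.univ) ∧
      ∀ T : Set V,
        cliqueWorth G w T ≤
          ∑ S ∈ (stableSetsOf G).filter (fun S : Finset V => ((S : Set V) ∩ T).Nonempty), y S)
    ↔
    -- `y` is an optimal solution of the dual LP
    ((∀ v : V, w v ≤ ∑ S ∈ (stableSetsOf G).filter (fun S => v ∈ S), y S) ∧
      ∀ y' : Finset V → ℝ, (∀ S ∈ stableSetsOf G, 0 ≤ y' S) →
        (∀ v : V, w v ≤ ∑ S ∈ (stableSetsOf G).filter (fun S => v ∈ S), y' S) →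
        ∑ S ∈ stableSetsOf G, y S ≤ ∑ S ∈ stableSetsOf G, y' S) := by
  constructor
  · rintro ⟨h1, h2⟩
    have hfeas : ∀ v : V, w v ≤ ∑ S ∈ (stableSetsOf G).filter (fun S => v ∈ S), y S := by
      intro v
      have hv := h2 ({v} : Set V)
      rw [cliqueWorth_singleton G w hw v] at hv
      refine hv.trans (le_of_eq ?_)
      congr 1
      apply Finset.filter_congr
      intro S _
      simp only [Set.inter_singleton_nonempty, Finset.mem_coe, eq_iff_iff]
    refine ⟨hfeas, fun y' hy' hfeas' => ?_⟩
    rw [h1]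
    exact weak_duality y' hy' hfeas'
  · rintro ⟨hfeas, hopt⟩
    refine ⟨le_antisymm ?_ (weak_duality y hy hfeas), cond2_of_feasible y hy hfeas⟩
    apply le_of_forall_pos_le_add
    intro ε hε
    obtain ⟨y', hy', hfeas', htot⟩ := exists_approx_feasible G hG w hw hε
    exact (hopt y' hy' hfeas').trans htot
end
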